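/- arXiv:2410.05422 — 11 statements merged into one kernel-verified Lean document; each statement's English description precedes it below -/
import Mathlib

section
/- If a finite simple graph G admits a neighborhood 3-balanced coloring ℓ, then for distinct colors i ≠ j the number of edges whose endpoints are colored {i, j} equals 2|E(G)|/9, the number of edges with both endpoints colored i equals |E(G)|/9, and consequently 9 divides |E(G)|. -/
/-- A coloring `ℓ : V → ZMod 3` of a simple graph `G` is neighborhood 3-balanced if
every vertex has an equal number of neighbors of each of the three colors. -/
def NBalanced {V : Type*} (G : SimpleGraph V) (ℓ : V → ZMod 3) : Prop :=
  ∀ v : V, ∀ i j : ZMod 3,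
    {w | G.Adj v w ∧ ℓ w = i}.ncard = {w | G.Adj v w ∧ ℓ w = j}.ncard

open Finset

section Aux

set_option linter.unusedSectionVars false

variable {V : Type*} [Fintype V] [DecidableEq V] (G : SimpleGraph V) [DecidableRel G.Adj]
  (ℓ : V → ZMod 3)

/-- Edges whose color multiset is `s`. -/
private def Efin (s : Sym2 (ZMod 3)) : Finset (Sym2 V) :=
  G.edgeSet.toFinset.filter (fun e => Sym2.map ℓ e = s)

/-- Ordered adjacent pairs with colors exactly `(i, j)`. -/
private def Pfin (i j : ZMod 3) : Finset (V × V) :=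
  Finset.univ.filter (fun p => G.Adj p.1 p.2 ∧ ℓ p.1 = i ∧ ℓ p.2 = j)

/-- Ordered adjacent pairs with color multiset `s`. -/
private def Qfin (s : Sym2 (ZMod 3)) : Finset (V × V) :=
  Finset.univ.filter (fun p => G.Adj p.1 p.2 ∧ s(ℓ p.1, ℓ p.2) = s)

private lemma Qfin_card (s : Sym2 (ZMod 3)) :
    (Qfin G ℓ s).card = 2 * (Efin G ℓ s).card := by
  rw [Finset.card_eq_sum_card_fiberwise (f := fun p : V × V => s(p.1, p.2))
    (t := Efin G ℓ s) ?_]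
  · rw [Finset.sum_congr rfl (g := fun _ => 2) ?_, Finset.sum_const, smul_eq_mul, mul_comm]
    intro e he
    induction e using Sym2.ind with
    | _ a b =>
      simp only [Efin, mem_filter, Set.mem_toFinset, SimpleGraph.mem_edgeSet,
        Sym2.map_pair_eq] at he
      obtain ⟨hadj, hmap⟩ := he
      have hab : a ≠ b := hadj.ne
      have : (Qfin G ℓ s).filter (fun p => s(p.1, p.2) = s(a, b)) = {(a, b), (b, a)} := by
        ext ⟨x, y⟩
        simp only [Qfin, mem_filter, mem_univ, true_and, mem_insert, mem_singleton,
          Prod.mk.injEq, Sym2.eq_iff]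
        constructor
        · rintro ⟨-, (⟨rfl, rfl⟩ | ⟨rfl, rfl⟩)⟩
          · exact Or.inl ⟨rfl, rfl⟩
          · exact Or.inr ⟨rfl, rfl⟩
        · rintro (⟨rfl, rfl⟩ | ⟨rfl, rfl⟩)
          · exact ⟨⟨hadj, hmap⟩, Or.inl ⟨rfl, rfl⟩⟩
          · refine ⟨⟨hadj.symm, ?_⟩, Or.inr ⟨rfl, rfl⟩⟩
            rw [Sym2.eq_swap]; exact hmap
      rw [this, Finset.card_pair (by simp [hab])]
  · rintro ⟨x, y⟩ hp
    simp only [Qfin, Finset.mem_coe, mem_filter, mem_univ, true_and] at hp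
    simp only [Efin, Finset.mem_coe, mem_filter, Set.mem_toFinset, SimpleGraph.mem_edgeSet, Sym2.map_pair_eq]
    exact ⟨hp.1, hp.2⟩

private lemma Q_eq_diag (i : ZMod 3) : Qfin G ℓ s(i, i) = Pfin G ℓ i i := by
  ext ⟨x, y⟩
  simp only [Qfin, Pfin, mem_filter, mem_univ, true_and, Sym2.eq_iff, or_self]

private lemma Q_eq_union {i j : ZMod 3} (hij : i ≠ j) :
    (Pfin G ℓ i j).card + (Pfin G ℓ j i).card = (Qfin G ℓ s(i, j)).card := by
  rw [← Finset.card_union_of_disjoint]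
  · congr 1
    ext ⟨x, y⟩
    simp only [Qfin, Pfin, mem_filter, mem_univ, true_and, mem_union, Sym2.eq_iff]
    tauto
  · rw [Finset.disjoint_left]
    rintro ⟨x, y⟩ h1 h2
    simp only [Pfin, mem_filter, mem_univ, true_and] at h1 h2
    exact hij (h1.2.1 ▸ h2.2.1.symm ▸ rfl)

private lemma P_swap (i j : ZMod 3) : (Pfin G ℓ i j).card = (Pfin G ℓ j i).card := by
  apply Finset.card_nbij' (i := Prod.swap) (j := Prod.swap)
  · rintro ⟨x, y⟩ hp
    simp only [Pfin, Finset.mem_coe, mem_filter, mem_univ, true_and, Prod.swap] at hp ⊢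
    exact ⟨hp.1.symm, hp.2.2, hp.2.1⟩
  · rintro ⟨x, y⟩ hp
    simp only [Pfin, Finset.mem_coe, mem_filter, mem_univ, true_and, Prod.swap] at hp ⊢
    exact ⟨hp.1.symm, hp.2.2, hp.2.1⟩
  · intro p _; simp
  · intro p _; simp

private lemma P_card (i j : ZMod 3) :
    (Pfin G ℓ i j).card =
      ∑ v ∈ Finset.univ.filter (fun v => ℓ v = i),
        (Finset.univ.filter (fun w => G.Adj v w ∧ ℓ w = j)).card := by
  rw [Finset.card_eq_sum_card_fiberwise (f := Prod.fst)
    (t := Finset.univ.filter (fun v => ℓ v = i)) ?_]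
  · refine Finset.sum_congr rfl fun v hv => ?_
    simp only [mem_filter, mem_univ, true_and] at hv
    apply Finset.card_bij (fun p _ => p.2)
    · rintro ⟨x, y⟩ hp
      simp only [Pfin, mem_filter, mem_univ, true_and] at hp ⊢
      obtain ⟨⟨hadj, _, hy⟩, hx⟩ := hp
      subst hx
      exact ⟨hadj, hy⟩
    · rintro ⟨x, y⟩ hx ⟨x', y'⟩ hy hxy
      simp only [mem_filter] at hx hy
      simp only at hxy
      ext <;> simp [hx.2, hy.2, hxy]
    · intro w hw
      simp only [mem_filter, mem_univ, true_and] at hw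
      exact ⟨(v, w), by simp [Pfin, hw.1, hw.2, hv], rfl⟩
  · rintro ⟨x, y⟩ hp
    simp only [Pfin, Finset.mem_coe, mem_filter, mem_univ, true_and] at hp ⊢
    exact hp.2.1

end Aux

theorem stmt1 {V : Type*} [Fintype V] (G : SimpleGraph V) (ℓ : V → ZMod 3)
    (h : NBalanced G ℓ) :
    (∀ i j : ZMod 3, i ≠ j →
      9 * {e ∈ G.edgeSet | Sym2.map ℓ e = s(i, j)}.ncard = 2 * G.edgeSet.ncard) ∧
    (∀ i : ZMod 3,
      9 * {e ∈ G.edgeSet | Sym2.map ℓ e = s(i, i)}.ncard = G.edgeSet.ncard) ∧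
    9 ∣ G.edgeSet.ncard := by
  classical
  have hncard : ∀ s : Sym2 (ZMod 3),
      {e ∈ G.edgeSet | Sym2.map ℓ e = s}.ncard = (Efin G ℓ s).card := by
    intro s
    rw [Set.ncard_eq_toFinset_card']
    congr 1
    ext e
    simp [Efin, Set.mem_toFinset]
  -- balance in Finset form
  have hvc : ∀ (v : V) (j : ZMod 3),
      {w | G.Adj v w ∧ ℓ w = j}.ncard
        = (Finset.univ.filter (fun w => G.Adj v w ∧ ℓ w = j)).card := by
    intro v j
    rw [Set.ncard_eq_toFinset_card']
    simp [Set.toFinset_setOf]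
  have hbalance : ∀ i j : ZMod 3, (Pfin G ℓ i j).card = (Pfin G ℓ i i).card := by
    intro i j
    rw [P_card, P_card]
    refine Finset.sum_congr rfl fun v _ => ?_
    have := h v j i
    rwa [hvc, hvc] at this
  have hQd : ∀ i : ZMod 3, (Pfin G ℓ i i).card = 2 * (Efin G ℓ s(i, i)).card := by
    intro i
    rw [← Q_eq_diag, Qfin_card]
  have hPoff : ∀ i j : ZMod 3, i ≠ j →
      (Pfin G ℓ i j).card = (Efin G ℓ s(i, j)).card := by
    intro i j hij
    have h1 := Q_eq_union G ℓ hij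
    rw [Qfin_card, ← P_swap G ℓ i j] at h1
    omega
  have hoff : ∀ i j : ZMod 3, i ≠ j →
      (Efin G ℓ s(i, j)).card = 2 * (Efin G ℓ s(i, i)).card := by
    intro i j hij
    rw [← hPoff i j hij, hbalance i j, hQd]
  have hee : ∀ i j : ZMod 3, i ≠ j →
      (Efin G ℓ s(i, i)).card = (Efin G ℓ s(j, j)).card := by
    intro i j hij
    have h1 := hoff i j hij
    have h2 := hoff j i hij.symm
    rw [show s(j, i) = s(i, j) from Sym2.eq_swap] at h2
    omega
  have hdiag : ∀ i : ZMod 3, (Efin G ℓ s(i, i)).card = (Efin G ℓ s(0, 0)).card := by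
    intro i
    by_cases hi : i = 0
    · subst hi; rfl
    · exact hee i 0 hi
  have key : ∀ s : Sym2 (ZMod 3),
      (Efin G ℓ s).card = (if s.IsDiag then 1 else 2) * (Efin G ℓ s(0, 0)).card := by
    intro s
    induction s using Sym2.ind with
    | _ i j =>
      by_cases hij : i = j
      · subst hij
        rw [if_pos (by simp [Sym2.mk_isDiag_iff]), one_mul, hdiag]
      · rw [if_neg (by simp [Sym2.mk_isDiag_iff, hij]), hoff i j hij, hdiag]
  have hm : G.edgeSet.ncard = 9 * (Efin G ℓ s(0, 0)).card := by
    rw [Set.ncard_eq_toFinset_card',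
      Finset.card_eq_sum_card_fiberwise (f := Sym2.map ℓ)
        (t := (Finset.univ : Finset (Sym2 (ZMod 3)))) (fun e _ => mem_univ _)]
    have hsum : (∑ b : Sym2 (ZMod 3),
        (G.edgeSet.toFinset.filter (fun a => Sym2.map ℓ a = b)).card)
        = ∑ b : Sym2 (ZMod 3), (if b.IsDiag then 1 else 2) * (Efin G ℓ s(0, 0)).card :=
      Finset.sum_congr rfl fun s _ => key s
    rw [hsum, ← Finset.sum_mul,
      show (∑ s : Sym2 (ZMod 3), (if s.IsDiag then 1 else 2)) = 9 from by decide]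
  refine ⟨fun i j hij => ?_, fun i => ?_, ?_⟩
  · rw [hncard, hoff i j hij, hdiag, hm]
    ring
  · rw [hncard, hdiag, hm]
  · rw [hm]
    exact dvd_mul_right 9 _
end

section
/- Let m, j be positive integers with m ≥ 5 and 1 ≤ j < m/2. If the generalized Petersen graph G(m, j) admits a neighborhood 3-balanced coloring, then 3 divides m. -/
/-- The generalized Petersen graph `G(m, j)`.  Vertices: `Sum.inl x` are the exterior
vertices `v_x` and `Sum.inr x` are the interior vertices `u_x`, for `x : ZMod m`.
Edges: `v_i v_{i+1}`, `v_i u_i`, and `u_i u_{i+j}`. -/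
def genPetersen (m j : ℕ) : SimpleGraph (ZMod m ⊕ ZMod m) :=
  SimpleGraph.fromRel (fun a b =>
    match a, b with
    | Sum.inl x, Sum.inl y => y = x + 1
    | Sum.inl x, Sum.inr y => y = x
    | Sum.inr x, Sum.inr y => y = x + (j : ZMod m)
    | _, _ => False)

lemma h1' (m : ℕ) (hm : 5 ≤ m) : (1 : ZMod m) ≠ 0 := by
  intro hc
  have : m ∣ 1 := (ZMod.natCast_eq_zero_iff 1 m).mp (by simpa using hc)
  have := Nat.le_of_dvd one_pos this
  omega

lemma hj' (m j : ℕ) (hj1 : 1 ≤ j) (hj2 : 2 * j < m) : (j : ZMod m) ≠ 0 := by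
  intro hc
  have : m ∣ j := (ZMod.natCast_eq_zero_iff j m).mp hc
  have := Nat.le_of_dvd (by omega) this
  omega

lemma h2j' (m j : ℕ) (hj1 : 1 ≤ j) (hj2 : 2 * j < m) : (j : ZMod m) + (j : ZMod m) ≠ 0 := by
  intro hc
  have : m ∣ j + j := (ZMod.natCast_eq_zero_iff (j+j) m).mp (by push_cast; linear_combination hc)
  have := Nat.le_of_dvd (by omega) this
  omega

lemma adj_inl (m j : ℕ) (hm : 5 ≤ m) (x : ZMod m) (w : ZMod m ⊕ ZMod m) :
    (genPetersen m j).Adj (Sum.inl x) w ↔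
      (w = Sum.inl (x+1) ∨ w = Sum.inl (x-1) ∨ w = Sum.inr x) := by
  have h1 := h1' m hm
  cases w with
  | inl y =>
    simp only [genPetersen, SimpleGraph.fromRel_adj]
    constructor
    · rintro ⟨hne, h | h⟩
      · left; rw [h]
      · subst h; right; left; simp
    · rintro (h | h | h)
      · cases h
        refine ⟨fun hc => ?_, Or.inl rfl⟩
        rw [Sum.inl.injEq] at hc
        exact h1 (by linear_combination -hc)
      · cases h
        refine ⟨fun hc => ?_, Or.inr (by simp)⟩
        rw [Sum.inl.injEq] at hc
        exact h1 (by linear_combination hc)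
      · simp at h
  | inr y =>
    simp only [genPetersen, SimpleGraph.fromRel_adj]
    constructor
    · rintro ⟨hne, h | h⟩
      · right; right; rw [h]
      · exact absurd h id
    · rintro (h | h | h)
      · simp at h
      · simp at h
      · rw [Sum.inr.injEq] at h
        exact ⟨by simp, Or.inl h⟩

lemma adj_inr (m j : ℕ) (hj1 : 1 ≤ j) (hj2 : 2 * j < m) (x : ZMod m) (w : ZMod m ⊕ ZMod m) :
    (genPetersen m j).Adj (Sum.inr x) w ↔
      (w = Sum.inr (x + j) ∨ w = Sum.inr (x - j) ∨ w = Sum.inl x) := by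
  have hj := hj' m j hj1 hj2
  cases w with
  | inl y =>
    simp only [genPetersen, SimpleGraph.fromRel_adj]
    constructor
    · rintro ⟨hne, h | h⟩
      · exact absurd h id
      · right; right; rw [h]
    · rintro (h | h | h)
      · simp at h
      · simp at h
      · rw [Sum.inl.injEq] at h
        exact ⟨by simp, Or.inr h.symm⟩
  | inr y =>
    simp only [genPetersen, SimpleGraph.fromRel_adj]
    constructor
    · rintro ⟨hne, h | h⟩
      · left; rw [h]
      · subst h; right; left; simp
    · rintro (h | h | h)
      · cases h
        refine ⟨fun hc => ?_, Or.inl rfl⟩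
        rw [Sum.inr.injEq] at hc
        exact hj (by linear_combination -hc)
      · cases h
        refine ⟨fun hc => ?_, Or.inr (by simp)⟩
        rw [Sum.inr.injEq] at hc
        exact hj (by linear_combination hc)
      · simp at h

theorem stmt5 (m j : ℕ) (hm : 5 ≤ m) (hj1 : 1 ≤ j) (hj2 : 2 * j < m)
    (h : ∃ ℓ, NBalanced (genPetersen m j) ℓ) : 3 ∣ m := by
  classical
  obtain ⟨ℓ, hℓ⟩ := h
  haveI : NeZero m := ⟨by omega⟩
  -- every vertex has exactly 3 neighbors
  have hnbr : ∀ v : ZMod m ⊕ ZMod m,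
      (Finset.univ.filter (fun w => (genPetersen m j).Adj v w)).card = 3 := by
    intro v
    cases v with
    | inl x =>
      have hset : Finset.univ.filter (fun w => (genPetersen m j).Adj (Sum.inl x) w)
          = {Sum.inl (x+1), Sum.inl (x-1), Sum.inr x} := by
        ext w
        simp [adj_inl m j hm]
      rw [hset]
      rw [Finset.card_insert_of_notMem, Finset.card_insert_of_notMem,
        Finset.card_singleton]
      · simp
      · simp only [Finset.mem_insert, Finset.mem_singleton]
        push_neg
        refine ⟨fun hc => ?_, by simp⟩
        rw [Sum.inl.injEq] at hc
        have h2 : ((2:ℕ) : ZMod m) = 0 := by push_cast; linear_combination hc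
        have := Nat.le_of_dvd (by omega) ((ZMod.natCast_eq_zero_iff 2 m).mp h2)
        omega
    | inr x =>
      have hset : Finset.univ.filter (fun w => (genPetersen m j).Adj (Sum.inr x) w)
          = {Sum.inr (x+j), Sum.inr (x-j), Sum.inl x} := by
        ext w
        simp [adj_inr m j hj1 hj2]
      rw [hset]
      rw [Finset.card_insert_of_notMem, Finset.card_insert_of_notMem,
        Finset.card_singleton]
      · simp
      · simp only [Finset.mem_insert, Finset.mem_singleton]
        push_neg
        refine ⟨fun hc => ?_, by simp⟩
        rw [Sum.inr.injEq] at hc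
        exact h2j' m j hj1 hj2 (by linear_combination hc)
  -- every vertex has exactly one neighbor of each color
  have hone : ∀ v : ZMod m ⊕ ZMod m, ∀ c : ZMod 3,
      (Finset.univ.filter (fun w => (genPetersen m j).Adj v w ∧ ℓ w = c)).card = 1 := by
    intro v c
    have keyn : ∀ c' : ZMod 3, ({w | (genPetersen m j).Adj v w ∧ ℓ w = c'}).ncard
        = (Finset.univ.filter (fun w => (genPetersen m j).Adj v w ∧ ℓ w = c')).card := by
      intro c'
      rw [show {w | (genPetersen m j).Adj v w ∧ ℓ w = c'}
          = ↑(Finset.univ.filter (fun w => (genPetersen m j).Adj v w ∧ ℓ w = c')) by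
        ext w; simp]
      exact Set.ncard_coe_finset _
    have hcard : ∀ c' : ZMod 3,
        (Finset.univ.filter (fun w => (genPetersen m j).Adj v w ∧ ℓ w = c')).card
        = (Finset.univ.filter (fun w => (genPetersen m j).Adj v w ∧ ℓ w = c)).card := by
      intro c'
      have := hℓ v c' c
      rwa [keyn c', keyn c] at this
    have hsum : (Finset.univ.filter (fun w => (genPetersen m j).Adj v w)).card
        = ∑ c' : ZMod 3,
          (Finset.univ.filter (fun w => (genPetersen m j).Adj v w ∧ ℓ w = c')).card := by
      rw [Finset.card_eq_sum_card_fiberwise (f := ℓ) (t := Finset.univ)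
        (fun x _ => Finset.mem_univ _)]
      refine Finset.sum_congr rfl fun c' _ => ?_
      rw [Finset.filter_filter]
    rw [hnbr v, Finset.sum_congr rfl (fun c' _ => hcard c'), Finset.sum_const,
      Finset.card_univ] at hsum
    simp only [ZMod.card, smul_eq_mul] at hsum
    omega
  -- double counting
  have lhs : ∑ v : ZMod m ⊕ ZMod m,
      (Finset.univ.filter (fun w => (genPetersen m j).Adj v w ∧ ℓ w = 0)).card = m + m := by
    rw [Finset.sum_congr rfl (fun v _ => hone v 0), Finset.sum_const, Finset.card_univ]
    simp [ZMod.card, two_mul]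
  have rhs : ∑ v : ZMod m ⊕ ZMod m,
      (Finset.univ.filter (fun w => (genPetersen m j).Adj v w ∧ ℓ w = 0)).card
      = 3 * (Finset.univ.filter (fun w => ℓ w = 0)).card := by
    simp_rw [Finset.card_filter]
    rw [Finset.sum_comm]
    have hinner : ∀ w : ZMod m ⊕ ZMod m,
        (∑ v : ZMod m ⊕ ZMod m, if (genPetersen m j).Adj v w ∧ ℓ w = 0 then 1 else 0)
        = if ℓ w = 0 then 3 else 0 := by
      intro w
      by_cases hw : ℓ w = 0
      · simp only [hw, and_true, if_pos]
        rw [← Finset.card_filter]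
        have : (Finset.univ.filter (fun v => (genPetersen m j).Adj v w))
            = Finset.univ.filter (fun v => (genPetersen m j).Adj w v) := by
          ext v; simp [SimpleGraph.adj_comm]
        rw [this, hnbr w]
      · simp [hw]
    rw [Finset.sum_congr rfl (fun w _ => hinner w), Finset.sum_ite, Finset.sum_const,
      Finset.sum_const_zero, add_zero, smul_eq_mul, mul_comm, Finset.card_filter]
  rw [rhs] at lhs
  omega
end

section
/- Let m, j be positive integers with m ≥ 5 and 1 ≤ j < m/2. If 3 divides m and 3 does not divide j, then the generalized Petersen graph G(m, j) admits a neighborhood 3-balanced coloring; in fact the coloring ℓ(v_i) = ℓ(u_i) = i mod 3 is such a coloring. -/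
lemma single_aux {V : Type*} (G : SimpleGraph V) (ℓ : V → ZMod 3) (v a b c : V)
    (hN : ∀ w, G.Adj v w ↔ w = a ∨ w = b ∨ w = c)
    (hab : ℓ a ≠ ℓ b) (hac : ℓ a ≠ ℓ c) :
    {w | G.Adj v w ∧ ℓ w = ℓ a} = {a} := by
  ext w
  simp only [Set.mem_setOf_eq, Set.mem_singleton_iff, hN]
  constructor
  · rintro ⟨(rfl | rfl | rfl), hw⟩
    · rfl
    · exact absurd hw.symm hab
    · exact absurd hw.symm hac
  · rintro rfl; exact ⟨Or.inl rfl, rfl⟩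

lemma key {V : Type*} (G : SimpleGraph V) (ℓ : V → ZMod 3) (v a b c : V)
    (hN : ∀ w, G.Adj v w ↔ w = a ∨ w = b ∨ w = c)
    (hab : ℓ a ≠ ℓ b) (hac : ℓ a ≠ ℓ c) (hbc : ℓ b ≠ ℓ c)
    (i : ZMod 3) : {w | G.Adj v w ∧ ℓ w = i}.ncard = 1 := by
  have h3 : ∀ p q r s : ZMod 3, p ≠ q → p ≠ r → q ≠ r → s = p ∨ s = q ∨ s = r := by decide
  rcases h3 (ℓ a) (ℓ b) (ℓ c) i hab hac hbc with rfl | rfl | rfl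
  · rw [single_aux G ℓ v a b c hN hab hac, Set.ncard_singleton]
  · rw [single_aux G ℓ v b a c (fun w => (hN w).trans (by tauto)) hab.symm hbc,
      Set.ncard_singleton]
  · rw [single_aux G ℓ v c a b (fun w => (hN w).trans (by tauto)) hac.symm hbc.symm,
      Set.ncard_singleton]

lemma nbhd_inl (m j : ℕ) (hm : 5 ≤ m) (x : ZMod m) (w : ZMod m ⊕ ZMod m) :
    (genPetersen m j).Adj (Sum.inl x) w ↔
      w = Sum.inl (x + 1) ∨ w = Sum.inl (x - 1) ∨ w = Sum.inr x := by
  haveI : NeZero m := ⟨by omega⟩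
  have h10 : (1 : ZMod m) ≠ 0 := by
    haveI : Fact (1 < m) := ⟨by omega⟩
    exact one_ne_zero
  unfold genPetersen
  rw [SimpleGraph.fromRel_adj]
  cases w with
  | inl y =>
    simp only [ne_eq, Sum.inl.injEq, Sum.inr.injEq, reduceCtorEq, or_false, false_or]
    constructor
    · rintro ⟨hne, h | h⟩
      · exact Or.inl h
      · exact Or.inr (by rw [h]; ring)
    · rintro (rfl | rfl)
      · exact ⟨fun h => h10 (by linear_combination -h), Or.inl rfl⟩
      · exact ⟨fun h => h10 (by linear_combination h), Or.inr (by ring)⟩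
  | inr y =>
    simp only [ne_eq, Sum.inl.injEq, Sum.inr.injEq, reduceCtorEq, or_false, false_or,
      not_false_iff, true_and]

lemma nbhd_inr (m j : ℕ) (hm : 5 ≤ m) (hj1 : 1 ≤ j) (hj2 : 2 * j < m)
    (x : ZMod m) (w : ZMod m ⊕ ZMod m) :
    (genPetersen m j).Adj (Sum.inr x) w ↔
      w = Sum.inr (x + (j : ZMod m)) ∨ w = Sum.inr (x - (j : ZMod m)) ∨ w = Sum.inl x := by
  haveI : NeZero m := ⟨by omega⟩
  have hj0 : (j : ZMod m) ≠ 0 := by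
    rw [Ne, ZMod.natCast_eq_zero_iff]
    intro h
    have := Nat.le_of_dvd (by omega) h
    omega
  unfold genPetersen
  rw [SimpleGraph.fromRel_adj]
  cases w with
  | inr y =>
    simp only [ne_eq, Sum.inl.injEq, Sum.inr.injEq, reduceCtorEq, or_false, false_or]
    constructor
    · rintro ⟨hne, h | h⟩
      · exact Or.inl h
      · exact Or.inr (by rw [h]; ring)
    · rintro (rfl | rfl)
      · exact ⟨fun h => hj0 (by linear_combination -h), Or.inl rfl⟩
      · exact ⟨fun h => hj0 (by linear_combination h), Or.inr (by ring)⟩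
  | inl y =>
    simp only [ne_eq, Sum.inl.injEq, Sum.inr.injEq, reduceCtorEq, or_false, false_or,
      not_false_iff, true_and]
    tauto

theorem stmt6 (m j : ℕ) (hm : 5 ≤ m) (hj1 : 1 ≤ j) (hj2 : 2 * j < m)
    (h3m : 3 ∣ m) (h3j : ¬ 3 ∣ j) :
    (∃ ℓ, NBalanced (genPetersen m j) ℓ) ∧
      NBalanced (genPetersen m j)
        (fun a => match a with
          | Sum.inl x => (x.val : ZMod 3)
          | Sum.inr x => (x.val : ZMod 3)) := by
  haveI : NeZero m := ⟨by omega⟩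
  set ℓ : ZMod m ⊕ ZMod m → ZMod 3 :=
    (fun a => match a with
      | Sum.inl x => (x.val : ZMod 3)
      | Sum.inr x => (x.val : ZMod 3)) with hℓ
  set φ : ZMod m →+* ZMod 3 := ZMod.castHom h3m (ZMod 3) with hφ
  have hcast : ∀ y : ZMod m, ((y.val : ZMod 3)) = φ y := by
    intro y
    rw [hφ, ZMod.castHom_apply, ZMod.natCast_val]
  have hℓl : ∀ y : ZMod m, ℓ (Sum.inl y) = φ y := fun y => hcast y
  have hℓr : ∀ y : ZMod m, ℓ (Sum.inr y) = φ y := fun y => hcast y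
  have hjZ : ((j : ZMod 3)) ≠ 0 := by
    rw [Ne, ZMod.natCast_eq_zero_iff]
    exact h3j
  have hmain : NBalanced (genPetersen m j) ℓ := by
    intro v i i'
    have h1 : ∀ i : ZMod 3, {w | (genPetersen m j).Adj v w ∧ ℓ w = i}.ncard = 1 := by
      cases v with
      | inl x =>
        refine fun i => key _ ℓ _ (Sum.inl (x + 1)) (Sum.inl (x - 1)) (Sum.inr x)
          (nbhd_inl m j hm x) ?_ ?_ ?_ i
        · simp only [hℓl, hℓr, map_add, map_sub, map_one]
          intro h
          have : (2 : ZMod 3) = 0 := by linear_combination h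
          exact absurd this (by decide)
        · simp only [hℓl, hℓr, map_add, map_sub, map_one]
          intro h
          have : (1 : ZMod 3) = 0 := by linear_combination h
          exact absurd this (by decide)
        · simp only [hℓl, hℓr, map_add, map_sub, map_one]
          intro h
          have : (1 : ZMod 3) = 0 := by linear_combination -h
          exact absurd this (by decide)
      | inr x =>
        have hmap : φ ((j : ZMod m)) = (j : ZMod 3) := by
          rw [map_natCast]
        refine fun i => key _ ℓ _ (Sum.inr (x + (j : ZMod m))) (Sum.inr (x - (j : ZMod m)))
          (Sum.inl x) (nbhd_inr m j hm hj1 hj2 x) ?_ ?_ ?_ i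
        · simp only [hℓl, hℓr, map_add, map_sub, hmap]
          intro h
          have h2 : (2 : ZMod 3) * (j : ZMod 3) = 0 := by linear_combination h
          have : ∀ c : ZMod 3, c ≠ 0 → (2 : ZMod 3) * c ≠ 0 := by decide
          exact this _ hjZ h2
        · simp only [hℓl, hℓr, map_add, map_sub, hmap]
          intro h
          exact hjZ (by linear_combination h)
        · simp only [hℓl, hℓr, map_add, map_sub, hmap]
          intro h
          exact hjZ (by linear_combination -h)
    rw [h1 i, h1 i']
  exact ⟨⟨ℓ, hmain⟩, hmain⟩
end

section
/- Let m, j be positive integers with m ≥ 5 and 1 ≤ j < m/2. The generalized Petersen graph G(m, j) admits a neighborhood 3-balanced coloring if and only if 3 divides m and 3 does not divide j. -/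
open Sum

lemma z3_sum {x y z : ZMod 3} (h1 : x ≠ y) (h2 : x ≠ z) (h3 : y ≠ z) : x + y + z = 0 := by
  revert x y z; decide

lemma z3_pair {x u v : ZMod 3} (huv : u ≠ v) (hx : x ≠ -(u + v)) : x = u ∨ x = v := by
  revert x u v; decide

lemma z3_step {x y z : ZMod 3} (h : x + y + z = 0) : z - y = y - x := by
  revert x y z; decide

lemma z3_cancel {s x : ZMod 3} (hs : s ≠ 0) (h : x * s = 0) : x = 0 := by
  revert s x; decide

lemma z3_cover {c1 c2 c3 c : ZMod 3} (h12 : c1 ≠ c2) (h13 : c1 ≠ c3) (h23 : c2 ≠ c3) :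
    c = c1 ∨ c = c2 ∨ c = c3 := by revert c1 c2 c3 c; decide

lemma z3_exists_ne (x z : ZMod 3) : ∃ c, c ≠ x ∧ c ≠ z := by revert x z; decide

lemma zA {x0 x1 l1 l2 : ZMod 3} (h : l1 + l2 + x0 = 0) (h1 : l1 = x0) (h2 : x1 = l2) :
    x1 = x0 := by revert x0 x1 l1 l2; decide

lemma zB {x0 x1 l1 l2 : ZMod 3} (h : l1 + l2 + x0 = 0) (h1 : l1 = x1) (h2 : l2 = x0) :
    x1 = x0 := by revert x0 x1 l1 l2; decide

lemma gp_adj_inl {m j : ℕ} (h1 : (1 : ZMod m) ≠ 0) (x : ZMod m) (w : ZMod m ⊕ ZMod m) :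
    (genPetersen m j).Adj (inl x) w ↔ (w = inl (x + 1) ∨ w = inl (x - 1) ∨ w = inr x) := by
  cases w with
  | inl y =>
    simp only [genPetersen, SimpleGraph.fromRel_adj, ne_eq, inl.injEq, inr.injEq,
      reduceCtorEq, or_false]
    constructor
    · rintro ⟨hne, h | h⟩
      · exact Or.inl h
      · right; rw [h]; ring
    · rintro (h | h)
      · exact ⟨fun hc => h1 (by rw [hc] at h; linear_combination -h), Or.inl h⟩
      · exact ⟨fun hc => h1 (by rw [hc] at h; linear_combination h), Or.inr (by rw [h]; ring)⟩
  | inr y =>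
    simp only [genPetersen, SimpleGraph.fromRel_adj, ne_eq, inl.injEq, inr.injEq,
      reduceCtorEq, not_false_iff, true_and, false_or, or_false]

lemma gp_adj_inr {m j : ℕ} (hj : ((j : ℕ) : ZMod m) ≠ 0) (x : ZMod m) (w : ZMod m ⊕ ZMod m) :
    (genPetersen m j).Adj (inr x) w ↔
      (w = inr (x + (j : ZMod m)) ∨ w = inr (x - (j : ZMod m)) ∨ w = inl x) := by
  cases w with
  | inl y =>
    simp only [genPetersen, SimpleGraph.fromRel_adj, ne_eq, inl.injEq, inr.injEq,
      reduceCtorEq, false_or, or_false]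
    constructor
    · rintro ⟨-, h⟩; exact h.symm
    · intro h; exact ⟨not_false, h.symm⟩
  | inr y =>
    simp only [genPetersen, SimpleGraph.fromRel_adj, ne_eq, inl.injEq, inr.injEq,
      reduceCtorEq, or_false]
    constructor
    · rintro ⟨hne, h | h⟩
      · exact Or.inl h
      · right; rw [h]; ring
    · rintro (h | h)
      · exact ⟨fun hc => hj (by rw [hc] at h; linear_combination -h), Or.inl h⟩
      · exact ⟨fun hc => hj (by rw [hc] at h; linear_combination h), Or.inr (by rw [h]; ring)⟩

lemma colors_distinct {V : Type*} {G : SimpleGraph V} {ℓ : V → ZMod 3}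
    (hNB : NBalanced G ℓ) {v w1 w2 w3 : V}
    (hadj : ∀ w, G.Adj v w ↔ (w = w1 ∨ w = w2 ∨ w = w3)) :
    ℓ w1 ≠ ℓ w2 ∧ ℓ w1 ≠ ℓ w3 ∧ ℓ w2 ≠ ℓ w3 := by
  have key : ∀ p q r : V, (∀ w, G.Adj v w ↔ (w = p ∨ w = q ∨ w = r)) → ℓ p ≠ ℓ q := by
    intro p q r hpqr hpq
    obtain ⟨c, hc1, hc2⟩ := z3_exists_ne (ℓ p) (ℓ r)
    have hempty : {w | G.Adj v w ∧ ℓ w = c} = ∅ := by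
      ext w
      simp only [Set.mem_setOf_eq, Set.mem_empty_iff_false, iff_false, not_and]
      intro hadjw hcw
      rcases (hpqr w).mp hadjw with h' | h' | h' <;> rw [h'] at hcw
      · exact hc1 hcw.symm
      · exact hc1 (hpq.trans hcw).symm
      · exact hc2 hcw.symm
    have hfin : {w | G.Adj v w ∧ ℓ w = ℓ p}.Finite := by
      apply Set.Finite.subset (s := insert p (insert q {r}))
        (((Set.finite_singleton r).insert q).insert p)
      rintro w ⟨hw, -⟩
      rcases (hpqr w).mp hw with h' | h' | h' <;> simp [h']
    have h0 : {w | G.Adj v w ∧ ℓ w = ℓ p}.ncard = 0 := by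
      rw [hNB v (ℓ p) c, hempty, Set.ncard_empty]
    have hmem : p ∈ {w | G.Adj v w ∧ ℓ w = ℓ p} := ⟨(hpqr p).mpr (Or.inl rfl), rfl⟩
    rw [(Set.ncard_eq_zero hfin).mp h0] at hmem
    exact hmem
  refine ⟨key w1 w2 w3 hadj, ?_, ?_⟩
  · exact key w1 w3 w2 (fun w => (hadj w).trans (by tauto))
  · exact key w2 w3 w1 (fun w => (hadj w).trans (by tauto))

lemma ncard_color {V : Type*} {G : SimpleGraph V} {ℓ : V → ZMod 3} {v w1 w2 w3 : V}
    (hadj : ∀ w, G.Adj v w ↔ (w = w1 ∨ w = w2 ∨ w = w3))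
    (h12 : ℓ w1 ≠ ℓ w2) (h13 : ℓ w1 ≠ ℓ w3) (h23 : ℓ w2 ≠ ℓ w3) (c : ZMod 3) :
    {w | G.Adj v w ∧ ℓ w = c}.ncard = 1 := by
  have key : ∀ p q r : V, (∀ w, G.Adj v w ↔ (w = p ∨ w = q ∨ w = r)) →
      ℓ p ≠ ℓ q → ℓ p ≠ ℓ r → {w | G.Adj v w ∧ ℓ w = ℓ p}.ncard = 1 := by
    intro p q r h hq hr
    have hs : {w | G.Adj v w ∧ ℓ w = ℓ p} = {p} := by
      ext w
      simp only [Set.mem_setOf_eq, Set.mem_singleton_iff]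
      constructor
      · rintro ⟨hw, hc⟩
        rcases (h w).mp hw with h' | h' | h'
        · exact h'
        · rw [h'] at hc; exact absurd hc.symm hq
        · rw [h'] at hc; exact absurd hc.symm hr
      · intro h'
        rw [h']
        exact ⟨(h p).mpr (Or.inl rfl), rfl⟩
    rw [hs, Set.ncard_singleton]
  rcases z3_cover h12 h13 h23 (c := c) with rfl | rfl | rfl
  · exact key w1 w2 w3 hadj h12 h13
  · exact key w2 w1 w3 (fun w => (hadj w).trans (by tauto)) h12.symm h23
  · exact key w3 w1 w2 (fun w => (hadj w).trans (by tauto)) h13.symm h23.symm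

lemma core {m jn : ℕ} (a b : ZMod m → ZMod 3)
    (h1 : ∀ i, a (i + 1) ≠ a (i - 1))
    (hb : ∀ i, b i = -(a (i + 1) + a (i - 1)))
    (h4 : ∀ i, b (i + (jn : ZMod m)) ≠ b (i - (jn : ZMod m)))
    (h5 : ∀ i, a i ≠ b (i + (jn : ZMod m)))
    (h6 : ∀ i, a i ≠ b (i - (jn : ZMod m)))
    (hE2 : ∀ i, b (i + (jn : ZMod m)) + b (i - (jn : ZMod m)) + a i = 0) :
    3 ∣ m ∧ ¬ 3 ∣ jn := by
  set J : ZMod m := (jn : ZMod m) with hJ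
  have F3 : ∀ i, a (i + 2) ≠ a i := by
    intro i
    have h := h1 (i + 1)
    rwa [show i + 1 + 1 = i + 2 by ring, show i + 1 - 1 = i by ring] at h
  have DA : ∀ u, a u = a (u + J + 1) ∨ a u = a (u + J - 1) := by
    intro u
    have hx := h5 u
    rw [hb (u + J)] at hx
    exact z3_pair (h1 (u + J)) hx
  have DQ : ∀ u, a u = a (u - J + 1) ∨ a u = a (u - J - 1) := by
    intro u
    have hx := h6 u
    rw [hb (u - J)] at hx
    exact z3_pair (h1 (u - J)) hx
  have DA' : ∀ u, a (u + J + 1) = a u ∨ a (u + J + 1) = a (u + 2) := by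
    intro u
    have hx := h6 (u + J + 1)
    rw [show u + J + 1 - J = u + 1 by ring, hb (u + 1),
      show u + 1 + 1 = u + 2 by ring, show u + 1 - 1 = u by ring] at hx
    rcases z3_pair (F3 u) hx with h' | h'
    · exact Or.inr h'
    · exact Or.inl h'
  have DQ' : ∀ u, a (u - J + 1) = a u ∨ a (u - J + 1) = a (u + 2) := by
    intro u
    have hx := h5 (u - J + 1)
    rw [show u - J + 1 + J = u + 1 by ring, hb (u + 1),
      show u + 1 + 1 = u + 2 by ring, show u + 1 - 1 = u by ring] at hx
    rcases z3_pair (F3 u) hx with h' | h'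
    · exact Or.inr h'
    · exact Or.inl h'
  have EII : ∀ i, a i = a (i - J + 1) + a (i - J - 1) + a (i + J + 1) + a (i + J - 1) := by
    intro i
    have e := hE2 i
    rw [hb (i + J), hb (i - J), show i + J + 1 = i + J + 1 by ring] at e
    rw [show i + J - 1 = i + J - 1 by ring] at e
    linear_combination e
  have h4' : ∀ i, b (i + 2 * J) ≠ b i := by
    intro i
    have h := h4 (i + J)
    rwa [show i + J + J = i + 2 * J by ring, show i + J - J = i by ring] at h
  have F5 : ∀ i, a (i + 4) ≠ a i := by
    intro i H
    have SR : a (i + J + 1) + a (i + J + 3) = a i + a (i + 2) := by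
      rcases DA (i + 2) with h | h
      · rw [show i + 2 + J + 1 = i + J + 3 by ring] at h
        rcases DA' i with h' | h'
        · rw [h', ← h]
        · exfalso
          apply F3 (i + J + 1)
          rw [show i + J + 1 + 2 = i + J + 3 by ring]
          exact h.symm.trans h'.symm
      · rw [show i + 2 + J - 1 = i + J + 1 by ring] at h
        rcases DA' (i + 2) with h' | h'
        · rw [show i + 2 + J + 1 = i + J + 3 by ring] at h'
          exfalso
          apply F3 (i + J + 1)
          rw [show i + J + 1 + 2 = i + J + 3 by ring]
          exact h'.trans h
        · rw [show i + 2 + J + 1 = i + J + 3 by ring, show i + 2 + 2 = i + 4 by ring] at h'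
          rw [H] at h'
          rw [← h, h']
          ring
    have hE := EII (i + 2)
    rw [show i + 2 - J + 1 = i - J + 3 by ring, show i + 2 - J - 1 = i - J + 1 by ring,
        show i + 2 + J + 1 = i + J + 3 by ring, show i + 2 + J - 1 = i + J + 1 by ring] at hE
    have SL : a (i - J + 1) + a (i - J + 3) + a i = 0 := by
      linear_combination -hE - SR
    rcases DQ (i + 2) with g | g
    · rw [show i + 2 - J + 1 = i - J + 3 by ring] at g
      rcases DQ' i with g' | g'
      · exact F3 i (zA SL g' g)
      · exfalso
        apply F3 (i - J + 1)
        rw [show i - J + 1 + 2 = i - J + 3 by ring]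
        exact g.symm.trans g'.symm
    · rw [show i + 2 - J - 1 = i - J + 1 by ring] at g
      rcases DQ' (i + 2) with g' | g'
      · rw [show i + 2 - J + 1 = i - J + 3 by ring] at g'
        exfalso
        apply F3 (i - J + 1)
        rw [show i - J + 1 + 2 = i - J + 3 by ring]
        exact g'.trans g
      · rw [show i + 2 - J + 1 = i - J + 3 by ring, show i + 2 + 2 = i + 4 by ring] at g'
        rw [H] at g'
        exact F3 i (zB SL g.symm g')
  have T : ∀ i, a i + a (i + 2) + a (i + 4) = 0 := by
    intro i
    have n3 : a (i + 2) ≠ a (i + 4) := by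
      have h := F3 (i + 2)
      rw [show i + 2 + 2 = i + 4 by ring] at h
      exact h.symm
    exact z3_sum (F3 i).symm (F5 i).symm n3
  have sstep : ∀ i, a (i + 4) - a (i + 2) = a (i + 2) - a i := fun i => z3_step (T i)
  have sconst : ∀ (k : ℕ) (i : ZMod m),
      a (i + 2) - a i = a (i + 2 * (k : ZMod m) + 2) - a (i + 2 * (k : ZMod m)) := by
    intro k
    induction k with
    | zero => intro i; norm_num
    | succ n ih =>
      intro i
      have ee : (((n : ℕ) + 1 : ℕ) : ZMod m) = ((n : ℕ) : ZMod m) + 1 := by push_cast; ring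
      rw [ee, show i + 2 * (((n : ℕ) : ZMod m) + 1) + 2 = (i + 2 * ((n : ℕ) : ZMod m)) + 4 by ring,
        show i + 2 * (((n : ℕ) : ZMod m) + 1) = (i + 2 * ((n : ℕ) : ZMod m)) + 2 by ring]
      rw [sstep (i + 2 * ((n : ℕ) : ZMod m))]
      exact ih i
  have chain : ∀ (k : ℕ) (i : ZMod m),
      a (i + 2 * (k : ZMod m)) = a i + ((k : ℕ) : ZMod 3) * (a (i + 2) - a i) := by
    intro k
    induction k with
    | zero => intro i; norm_num
    | succ n ih =>
      intro i
      have ee : (((n : ℕ) + 1 : ℕ) : ZMod m) = ((n : ℕ) : ZMod m) + 1 := by push_cast; ring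
      have e3 : (((n : ℕ) + 1 : ℕ) : ZMod 3) = ((n : ℕ) : ZMod 3) + 1 := by push_cast; ring
      rw [ee, e3, show i + 2 * (((n : ℕ) : ZMod m) + 1) = (i + 2 * ((n : ℕ) : ZMod m)) + 2 by ring]
      have hs := sconst n i
      have hi := ih i
      linear_combination hi - hs
  have hs0 : a ((0 : ZMod m) + 2) - a 0 ≠ 0 := sub_ne_zero_of_ne (F3 0)
  have m3 : 3 ∣ m := by
    have hc := chain m 0
    rw [ZMod.natCast_self, show (0 : ZMod m) + 2 * 0 = 0 by ring] at hc
    have : ((m : ℕ) : ZMod 3) * (a ((0 : ZMod m) + 2) - a 0) = 0 := by linear_combination -hc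
    exact (ZMod.natCast_eq_zero_iff m 3).mp (z3_cancel hs0 this)
  refine ⟨m3, ?_⟩
  intro hdvd
  have hj3 : ((jn : ℕ) : ZMod 3) = 0 := (ZMod.natCast_eq_zero_iff jn 3).mpr hdvd
  apply h4' 0
  have c1 := chain jn ((0 : ZMod m) + 1)
  have c2 := chain jn ((0 : ZMod m) - 1)
  rw [hj3, zero_mul, add_zero] at c1 c2
  rw [hb (0 + 2 * J), hb 0]
  rw [show (0 : ZMod m) + 2 * J + 1 = ((0 : ZMod m) + 1) + 2 * J by ring,
      show (0 : ZMod m) + 2 * J - 1 = ((0 : ZMod m) - 1) + 2 * J by ring, hJ]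
  rw [c1, c2]

lemma z3_nbr1 (y : ZMod 3) : y + 1 ≠ y - 1 ∧ y + 1 ≠ y ∧ y - 1 ≠ y := by revert y; decide

lemma z3_nbr2 (y t : ZMod 3) (ht : t ≠ 0) : y + t ≠ y - t ∧ y + t ≠ y ∧ y - t ≠ y := by
  revert y t; decide

theorem stmt7 (m j : ℕ) (hm : 5 ≤ m) (hj1 : 1 ≤ j) (hj2 : 2 * j < m) :
    (∃ ℓ, NBalanced (genPetersen m j) ℓ) ↔ (3 ∣ m ∧ ¬ 3 ∣ j) := by
  have h1ne : (1 : ZMod m) ≠ 0 := by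
    intro h
    have h' : ((1 : ℕ) : ZMod m) = 0 := by exact_mod_cast h
    have := (ZMod.natCast_eq_zero_iff 1 m).mp h'
    have := Nat.le_of_dvd one_pos this
    omega
  have hjne : ((j : ℕ) : ZMod m) ≠ 0 := by
    intro h
    have := (ZMod.natCast_eq_zero_iff j m).mp h
    have := Nat.le_of_dvd (by omega) this
    omega
  constructor
  · rintro ⟨ℓ, hNB⟩
    have HL := fun x : ZMod m => colors_distinct hNB (gp_adj_inl h1ne x)
    have HR := fun x : ZMod m => colors_distinct hNB (gp_adj_inr hjne x)
    refine core (fun i => ℓ (Sum.inl i)) (fun i => ℓ (Sum.inr i)) ?_ ?_ ?_ ?_ ?_ ?_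
    · exact fun i => (HL i).1
    · intro i
      have := z3_sum (HL i).1 (HL i).2.1 (HL i).2.2
      linear_combination this
    · exact fun i => (HR i).1
    · exact fun i => (HR i).2.1.symm
    · exact fun i => (HR i).2.2.symm
    · exact fun i => z3_sum (HR i).1 (HR i).2.1 (HR i).2.2
  · rintro ⟨hm3, hj3⟩
    have hjz : ((j : ℕ) : ZMod 3) ≠ 0 := by
      rwa [Ne, ZMod.natCast_eq_zero_iff]
    set f := ZMod.castHom hm3 (ZMod 3) with hf
    refine ⟨Sum.elim (fun i => f i) (fun i => f i), ?_⟩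
    intro v c c'
    have key : ∀ c : ZMod 3,
        {w | (genPetersen m j).Adj v w ∧ Sum.elim (fun i => f i) (fun i => f i) w = c}.ncard = 1 := by
      intro c
      cases v with
      | inl x =>
        refine ncard_color (gp_adj_inl h1ne x) ?_ ?_ ?_ c
        · show f (x + 1) ≠ f (x - 1)
          rw [map_add, map_sub, map_one]
          exact (z3_nbr1 (f x)).1
        · show f (x + 1) ≠ f x
          rw [map_add, map_one]
          exact (z3_nbr1 (f x)).2.1
        · show f (x - 1) ≠ f x
          rw [map_sub, map_one]
          exact (z3_nbr1 (f x)).2.2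
      | inr x =>
        refine ncard_color (gp_adj_inr hjne x) ?_ ?_ ?_ c
        · show f (x + (j : ZMod m)) ≠ f (x - (j : ZMod m))
          rw [map_add, map_sub, map_natCast]
          exact (z3_nbr2 (f x) _ hjz).1
        · show f (x + (j : ZMod m)) ≠ f x
          rw [map_add, map_natCast]
          exact (z3_nbr2 (f x) _ hjz).2.1
        · show f (x - (j : ZMod m)) ≠ f x
          rw [map_sub, map_natCast]
          exact (z3_nbr2 (f x) _ hjz).2.2
    rw [key c, key c']
end

section
/- For n ≥ 4, the Möbius ladder M_n (an n-cycle with edges added between opposite vertices) admits a neighborhood 3-balanced coloring if and only if 6 divides n. -/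
/-- The Möbius ladder `M_n`: an `n`-cycle `v_0 v_1 ⋯ v_{n-1}` together with the edges
`v_i v_{i+n/2}` joining opposite pairs of vertices. -/
def mobiusLadder (n : ℕ) : SimpleGraph (ZMod n) :=
  SimpleGraph.fromRel (fun x y => y = x + 1 ∨ y = x + ((n / 2 : ℕ) : ZMod n))

lemma zmod3_cases : ∀ a b : ZMod 3, b = a ∨ b = a + 1 ∨ b = a - 1 := by decide

lemma zmod3_cover (a b e : ZMod 3) (h : ∀ i : ZMod 3, i = a ∨ i = b ∨ i = e) :
    a + b + e = 0 ∧ a ≠ b := by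
  revert h; revert a b e; decide

theorem stmt10 (n : ℕ) (hn : 4 ≤ n) (hne : Even n) :
    (∃ ℓ, NBalanced (mobiusLadder n) ℓ) ↔ 6 ∣ n := by
  haveI : NeZero n := ⟨by omega⟩
  haveI : Fact (1 < n) := ⟨by omega⟩
  obtain ⟨m, hm⟩ := hne
  set c : ZMod n := ((n / 2 : ℕ) : ZMod n) with hc
  have hn2 : n / 2 + n / 2 = n := by omega
  have hcc : c + c = 0 := by rw [hc, ← Nat.cast_add, hn2, ZMod.natCast_self]
  have h1 : (1 : ZMod n) ≠ 0 := one_ne_zero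
  have hcne : c ≠ 0 := by
    rw [hc, Ne, ZMod.natCast_eq_zero_iff]
    intro hdvd
    have := Nat.le_of_dvd (by omega) hdvd
    omega
  have hadj : ∀ v w : ZMod n, (mobiusLadder n).Adj v w ↔
      v ≠ w ∧ (w = v + 1 ∨ w = v - 1 ∨ w = v + c) := by
    intro v w
    rw [mobiusLadder, SimpleGraph.fromRel_adj]
    constructor
    · rintro ⟨hvw, (h | h) | (h | h)⟩
      · exact ⟨hvw, Or.inl h⟩
      · exact ⟨hvw, Or.inr (Or.inr h)⟩
      · exact ⟨hvw, Or.inr (Or.inl (by rw [h]; ring))⟩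
      · refine ⟨hvw, Or.inr (Or.inr ?_)⟩
        rw [h, add_assoc, hcc, add_zero]
    · rintro ⟨hvw, h | h | h⟩
      · exact ⟨hvw, Or.inl (Or.inl h)⟩
      · exact ⟨hvw, Or.inr (Or.inl (by rw [h]; ring))⟩
      · exact ⟨hvw, Or.inl (Or.inr h)⟩
  have hv1 : ∀ v : ZMod n, v ≠ v + 1 := fun v h => h1 (left_eq_add.mp h)
  have hvm1 : ∀ v : ZMod n, v ≠ v - 1 := by
    intro v h
    apply h1
    have : v + 1 = (v - 1) + 1 := by rw [← h]
    have : v + 1 = v := by rw [this]; ring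
    exact left_eq_add.mp this.symm
  have hvc : ∀ v : ZMod n, v ≠ v + c := fun v h => hcne (left_eq_add.mp h)
  constructor
  · rintro ⟨ℓ, hb⟩
    have hcov : ∀ v : ZMod n, ∀ i : ZMod 3,
        i = ℓ (v + 1) ∨ i = ℓ (v - 1) ∨ i = ℓ (v + c) := by
      intro v i
      have hadj1 : (mobiusLadder n).Adj v (v + 1) :=
        (hadj v (v + 1)).mpr ⟨hv1 v, Or.inl rfl⟩
      have hpos : 0 < {w | (mobiusLadder n).Adj v w ∧ ℓ w = ℓ (v + 1)}.ncard :=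
        (Set.ncard_pos (Set.toFinite _)).mpr ⟨v + 1, hadj1, rfl⟩
      have hbb := hb v i (ℓ (v + 1))
      have hne' : {w | (mobiusLadder n).Adj v w ∧ ℓ w = i}.Nonempty :=
        (Set.ncard_pos (Set.toFinite _)).mp (by rw [hbb]; exact hpos)
      obtain ⟨w, hw, hwi⟩ := hne'
      rcases ((hadj v w).mp hw).2 with h | h | h
      · subst h; exact Or.inl hwi.symm
      · subst h; exact Or.inr (Or.inl hwi.symm)
      · subst h; exact Or.inr (Or.inr hwi.symm)
    have key : ∀ v : ZMod n, ℓ (v + 1) + ℓ (v - 1) + ℓ (v + c) = 0 ∧ ℓ (v + 1) ≠ ℓ (v - 1) :=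
      fun v => zmod3_cover _ _ _ (hcov v)
    have hsum2 : ∀ v : ZMod n, ℓ (v + 2) + ℓ v + ℓ (v - 2) = 0 := by
      intro v
      have h1' := (key (v + 1)).1
      have h2' := (key (v - 1)).1
      have h3' := (key (v + c)).1
      rw [show v + 1 + 1 = v + 2 from by ring, show v + 1 - 1 = v from by ring] at h1'
      rw [show v - 1 + 1 = v from by ring, show v - 1 - 1 = v - 2 from by ring] at h2'
      rw [show v + c + 1 = v + 1 + c from by ring, show v + c - 1 = v - 1 + c from by ring,
        show v + c + c = v from by rw [add_assoc, hcc, add_zero]] at h3'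
      linear_combination h1' + h2' - h3'
    have hdiff : ∀ v : ZMod n, ℓ (v + 2) - ℓ v = ℓ v - ℓ (v - 2) := by
      intro v
      have h := hsum2 v
      have h33 : (3 : ZMod 3) = 0 := rfl
      linear_combination h - h33 * ℓ v
    set d : ZMod 3 := ℓ 2 - ℓ 0 with hd
    have hdne : d ≠ 0 := by
      have hk := (key 1).2
      rw [show (1 : ZMod n) + 1 = 2 from by ring, show (1 : ZMod n) - 1 = 0 from by ring] at hk
      exact sub_ne_zero.mpr hk
    have hstep : ∀ k : ℕ, ℓ ((2 * k + 2 : ℕ) : ZMod n) - ℓ ((2 * k : ℕ) : ZMod n) = d := by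
      intro k
      induction k with
      | zero => rw [hd]; norm_num
      | succ k ih =>
        have h := hdiff ((2 * k + 2 : ℕ) : ZMod n)
        rw [show ((2 * k + 2 : ℕ) : ZMod n) - 2 = ((2 * k : ℕ) : ZMod n) from by
          push_cast; ring] at h
        rw [show ((2 * (k + 1) + 2 : ℕ) : ZMod n) = ((2 * k + 2 : ℕ) : ZMod n) + 2 from by
          push_cast; ring,
          show ((2 * (k + 1) : ℕ) : ZMod n) = ((2 * k + 2 : ℕ) : ZMod n) from by
          push_cast; ring, h]
        exact ih
    have htot : ∀ k : ℕ, ℓ ((2 * k : ℕ) : ZMod n) = ℓ 0 + (k : ZMod 3) * d := by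
      intro k
      induction k with
      | zero => norm_num
      | succ k ih =>
        have hs := hstep k
        rw [show ((2 * (k + 1) : ℕ) : ZMod n) = ((2 * k + 2 : ℕ) : ZMod n) from by
          push_cast; ring,
          show ((k + 1 : ℕ) : ZMod 3) = (k : ZMod 3) + 1 from by push_cast; ring]
        linear_combination hs + ih
    have hfin := htot (n / 2)
    rw [show ((2 * (n / 2) : ℕ) : ZMod n) = 0 from by
      rw [show 2 * (n / 2) = n from by omega, ZMod.natCast_self]] at hfin
    have hmd : ((n / 2 : ℕ) : ZMod 3) * d = 0 := by linear_combination - hfin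
    have hm0 : ((n / 2 : ℕ) : ZMod 3) = 0 := by
      rcases mul_eq_zero.mp hmd with h | h
      · exact h
      · exact absurd h hdne
    have h3d : (3 : ℕ) ∣ n / 2 := (ZMod.natCast_eq_zero_iff _ _).mp hm0
    omega
  · intro h6
    have h3 : (3 : ℕ) ∣ n := dvd_trans (by norm_num) h6
    set f := ZMod.castHom h3 (ZMod 3) with hf
    refine ⟨fun v => f v, ?_⟩
    intro v i j
    have hfc : f c = 0 := by
      rw [hc, map_natCast]
      exact (ZMod.natCast_eq_zero_iff _ _).mpr (by omega)
    have hset : ∀ i : ZMod 3, ∃ w : ZMod n,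
        {w' | (mobiusLadder n).Adj v w' ∧ f w' = i} = {w} := by
      intro i
      have hca : f (v + c) = f v := by rw [map_add, hfc, add_zero]
      have hp1 : f (v + 1) = f v + 1 := by rw [map_add, map_one]
      have hm1 : f (v - 1) = f v - 1 := by rw [map_sub, map_one]
      rcases zmod3_cases (f v) i with h | h | h
      · refine ⟨v + c, ?_⟩
        ext w'
        simp only [Set.mem_setOf_eq, Set.mem_singleton_iff, hadj]
        constructor
        · rintro ⟨⟨-, h' | h' | h'⟩, hcol⟩
          · exfalso; subst h'; rw [hp1, h] at hcol
            exact one_ne_zero (by linear_combination hcol : (1 : ZMod 3) = 0)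
          · exfalso; subst h'; rw [hm1, h] at hcol
            exact one_ne_zero (by linear_combination - hcol : (1 : ZMod 3) = 0)
          · exact h'
        · rintro rfl
          exact ⟨⟨hvc v, Or.inr (Or.inr rfl)⟩, by rw [hca, h]⟩
      · refine ⟨v + 1, ?_⟩
        ext w'
        simp only [Set.mem_setOf_eq, Set.mem_singleton_iff, hadj]
        constructor
        · rintro ⟨⟨-, h' | h' | h'⟩, hcol⟩
          · exact h'
          · exfalso; subst h'; rw [hm1, h] at hcol
            exact absurd (by linear_combination - hcol : (2 : ZMod 3) = 0) (by decide)
          · exfalso; subst h'; rw [hca, h] at hcol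
            exact one_ne_zero (by linear_combination - hcol : (1 : ZMod 3) = 0)
        · rintro rfl
          exact ⟨⟨hv1 v, Or.inl rfl⟩, by rw [hp1, h]⟩
      · refine ⟨v - 1, ?_⟩
        ext w'
        simp only [Set.mem_setOf_eq, Set.mem_singleton_iff, hadj]
        constructor
        · rintro ⟨⟨-, h' | h' | h'⟩, hcol⟩
          · exfalso; subst h'; rw [hp1, h] at hcol
            exact absurd (by linear_combination hcol : (2 : ZMod 3) = 0) (by decide)
          · exact h'
          · exfalso; subst h'; rw [hca, h] at hcol
            exact one_ne_zero (by linear_combination hcol : (1 : ZMod 3) = 0)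
        · rintro rfl
          exact ⟨⟨hvm1 v, Or.inr (Or.inl rfl)⟩, by rw [hm1, h]⟩
    obtain ⟨wi, hwi⟩ := hset i
    obtain ⟨wj, hwj⟩ := hset j
    show {w | (mobiusLadder n).Adj v w ∧ f w = i}.ncard
        = {w | (mobiusLadder n).Adj v w ∧ f w = j}.ncard
    rw [hwi, hwj, Set.ncard_singleton, Set.ncard_singleton]
end

section
/- Let G_1, …, G_k be graphs that pairwise intersect in exactly one common vertex v₀ (i.e., V(G_i) ∩ V(G_j) = {v₀} for i ≠ j) and suppose each G_i admits a neighborhood 3-balanced coloring. Then the union graph (⋃ V(G_i), ⋃ E(G_i)) admits a neighborhood 3-balanced coloring. -/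
theorem stmt12 {V : Type*} [Fintype V] {k : ℕ} (S : Fin k → Set V) (v₀ : V)
    (G : Fin k → SimpleGraph V)
    (hS : ∀ i j, i ≠ j → S i ∩ S j = {v₀})
    (hsupp : ∀ i a b, (G i).Adj a b → a ∈ S i ∧ b ∈ S i)
    (hbal : ∀ i, ∃ ℓ, NBalanced (G i) ℓ) :
    ∃ ℓ, NBalanced (⨆ i, G i) ℓ := by
  classical
  choose ℓ₀ hℓ₀ using hbal
  set ℓ' : Fin k → V → ZMod 3 := fun i v => ℓ₀ i v - ℓ₀ i v₀ with hℓ'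
  have hbal' : ∀ i, NBalanced (G i) (ℓ' i) := by
    intro i v a b
    have h1 : ∀ c : ZMod 3, {w | (G i).Adj v w ∧ ℓ' i w = c}
        = {w | (G i).Adj v w ∧ ℓ₀ i w = c + ℓ₀ i v₀} := by
      intro c; ext w; simp [hℓ', sub_eq_iff_eq_add]
    rw [h1 a, h1 b]; exact hℓ₀ i v _ _
  have hz : ∀ i, ℓ' i v₀ = 0 := fun i => sub_self _
  set ℓ : V → ZMod 3 := fun v => if h : ∃ i, v ∈ S i then ℓ' h.choose v else 0 with hℓdef
  have hagree : ∀ i v, v ∈ S i → ℓ v = ℓ' i v := by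
    intro i v hv
    have h : ∃ j, v ∈ S j := ⟨i, hv⟩
    rw [hℓdef]
    simp only [dif_pos h]
    by_cases hvv : v = v₀
    · subst hvv; rw [hz, hz]
    · rcases eq_or_ne h.choose i with he | hne
      · rw [he]
      · exfalso
        have hm : v ∈ S h.choose ∩ S i := ⟨h.choose_spec, hv⟩
        rw [hS _ _ hne] at hm
        exact hvv hm
  refine ⟨ℓ, ?_⟩
  intro v a b
  by_cases hv0 : v = v₀
  · subst hv0
    have key : ∀ c : ZMod 3, {w | (⨆ i, G i).Adj v w ∧ ℓ w = c}.ncard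
        = ∑ i, {w | (G i).Adj v w ∧ ℓ' i w = c}.ncard := by
      intro c
      have hset : {w | (⨆ i, G i).Adj v w ∧ ℓ w = c}
          = ⋃ i, {w | (G i).Adj v w ∧ ℓ' i w = c} := by
        ext w
        simp only [Set.mem_setOf_eq, SimpleGraph.iSup_adj, Set.mem_iUnion]
        constructor
        · rintro ⟨⟨i, hi⟩, hc⟩
          exact ⟨i, hi, by rw [← hagree i w (hsupp i _ _ hi).2]; exact hc⟩
        · rintro ⟨i, hi, hc⟩
          exact ⟨⟨i, hi⟩, by rw [hagree i w (hsupp i _ _ hi).2]; exact hc⟩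
      rw [hset, Set.ncard_eq_toFinset_card', Set.toFinset_iUnion]
      rw [Finset.card_biUnion]
      · exact Finset.sum_congr rfl fun i _ => (Set.ncard_eq_toFinset_card' _).symm
      · intro i _ j _ hij
        rw [Function.onFun, Finset.disjoint_left]
        intro w hwi hwj
        simp only [Set.mem_toFinset, Set.mem_setOf_eq] at hwi hwj
        have hm : w ∈ S i ∩ S j := ⟨(hsupp i _ _ hwi.1).2, (hsupp j _ _ hwj.1).2⟩
        rw [hS _ _ hij] at hm
        exact (G i).ne_of_adj hwi.1 hm.symm
    rw [key a, key b]
    exact Finset.sum_congr rfl fun i _ => hbal' i v a b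
  · by_cases hvS : ∃ i, v ∈ S i
    · obtain ⟨i, hi⟩ := hvS
      have hset : ∀ c, {w | (⨆ i, G i).Adj v w ∧ ℓ w = c}
          = {w | (G i).Adj v w ∧ ℓ' i w = c} := by
        intro c; ext w
        simp only [Set.mem_setOf_eq, SimpleGraph.iSup_adj]
        constructor
        · rintro ⟨⟨j, hj⟩, hc⟩
          have hji : j = i := by
            by_contra hne
            have hm : v ∈ S j ∩ S i := ⟨(hsupp j _ _ hj).1, hi⟩
            rw [hS _ _ hne] at hm
            exact hv0 hm
          subst hji
          exact ⟨hj, by rw [← hagree j w (hsupp j _ _ hj).2]; exact hc⟩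
        · rintro ⟨hj, hc⟩
          exact ⟨⟨i, hj⟩, by rw [hagree i w (hsupp i _ _ hj).2]; exact hc⟩
      rw [hset a, hset b]
      exact hbal' i v a b
    · have hset : ∀ c, {w | (⨆ i, G i).Adj v w ∧ ℓ w = c} = ∅ := by
        intro c
        ext w
        simp only [Set.mem_setOf_eq, SimpleGraph.iSup_adj, Set.mem_empty_iff_false, iff_false]
        rintro ⟨⟨j, hj⟩, -⟩
        exact hvS ⟨j, (hsupp j _ _ hj).1⟩
      rw [hset a, hset b]
end

section
/- If G₁ is a 3k₁-regular graph admitting a neighborhood 3-balanced coloring and G₂ is a 3k₂-regular graph admitting a neighborhood 3-balanced coloring (k₁, k₂ positive integers), then the join G₁ ∇ G₂ admits a neighborhood 3-balanced coloring. -/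
/-- The join `G₁ ∇ G₂`: the disjoint union of `G₁` and `G₂` together with all edges
between the two vertex sets. -/
def graphJoin {V₁ V₂ : Type*} (G₁ : SimpleGraph V₁) (G₂ : SimpleGraph V₂) :
    SimpleGraph (V₁ ⊕ V₂) where
  Adj a b :=
    match a, b with
    | Sum.inl x, Sum.inl y => G₁.Adj x y
    | Sum.inr x, Sum.inr y => G₂.Adj x y
    | Sum.inl _, Sum.inr _ => True
    | Sum.inr _, Sum.inl _ => True
  symm := by
    constructor
    intro a b h
    cases a <;> cases b <;> first | exact h.symm | trivial
  loopless := by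
    constructor
    intro a h
    cases a <;> exact h.ne rfl

open Finset in
lemma perVertex {V : Type*} [Fintype V] [DecidableEq V] (G : SimpleGraph V)
    [DecidableRel G.Adj] (ℓ : V → ZMod 3) (d : ℕ)
    (hreg : ∀ v, {w | G.Adj v w}.ncard = 3 * d) (hbal : NBalanced G ℓ) :
    ∀ v i, (univ.filter (fun w => G.Adj v w ∧ ℓ w = i)).card = d := by
  intro v i
  have hc : ∀ j : ZMod 3, (univ.filter (fun w => G.Adj v w ∧ ℓ w = j)).card
      = (univ.filter (fun w => G.Adj v w ∧ ℓ w = i)).card := by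
    intro j
    have := hbal v j i
    simpa [Set.ncard_eq_toFinset_card', Set.toFinset_setOf] using this
  have hsum : (univ.filter (fun w => G.Adj v w)).card
      = ∑ j : ZMod 3, (univ.filter (fun w => G.Adj v w ∧ ℓ w = j)).card := by
    rw [Finset.card_eq_sum_card_fiberwise (f := ℓ) (t := univ) (fun x _ => mem_univ _)]
    congr 1
    ext j
    rw [Finset.filter_filter]
  have hreg' : (univ.filter (fun w => G.Adj v w)).card = 3 * d := by
    have := hreg v
    simpa [Set.ncard_eq_toFinset_card', Set.toFinset_setOf] using this
  rw [hreg'] at hsum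
  simp only [hc] at hsum
  simp [Finset.card_univ] at hsum
  omega

open Finset in
lemma classesEq {V : Type*} [Fintype V] [DecidableEq V] (G : SimpleGraph V)
    [DecidableRel G.Adj] (ℓ : V → ZMod 3) (d : ℕ) (hd : 0 < d)
    (hreg : ∀ v, {w | G.Adj v w}.ncard = 3 * d) (hbal : NBalanced G ℓ) :
    ∀ i j : ZMod 3, {w | ℓ w = i}.ncard = {w | ℓ w = j}.ncard := by
  have hreg' : ∀ v, (univ.filter (fun w => G.Adj v w)).card = 3 * d := by
    intro v
    simpa [Set.ncard_eq_toFinset_card', Set.toFinset_setOf] using hreg v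
  have key : ∀ i : ZMod 3,
      3 * d * (univ.filter (fun w => ℓ w = i)).card = Fintype.card V * d := by
    intro i
    calc 3 * d * (univ.filter (fun w => ℓ w = i)).card
        = ∑ w ∈ univ.filter (fun w => ℓ w = i), (3 * d) := by
          rw [Finset.sum_const, smul_eq_mul, mul_comm]
      _ = ∑ w ∈ univ.filter (fun w => ℓ w = i),
            (univ.filter (fun v => G.Adj w v)).card := by
          refine Finset.sum_congr rfl fun w _ => ?_
          exact (hreg' w).symm
      _ = ∑ w ∈ univ.filter (fun w => ℓ w = i), ∑ v : V, if G.Adj w v then 1 else 0 := by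
          refine Finset.sum_congr rfl fun w _ => ?_
          rw [Finset.card_filter]
      _ = ∑ w : V, ∑ v : V, if ℓ w = i then (if G.Adj w v then 1 else 0) else 0 := by
          rw [Finset.sum_filter]
          refine Finset.sum_congr rfl fun w _ => ?_
          by_cases h : ℓ w = i <;> simp [h]
      _ = ∑ v : V, ∑ w : V, if G.Adj v w ∧ ℓ w = i then 1 else 0 := by
          rw [Finset.sum_comm]
          refine Finset.sum_congr rfl fun v _ => Finset.sum_congr rfl fun w _ => ?_
          have hvw : G.Adj v w ↔ G.Adj w v := G.adj_comm v w
          by_cases h1 : ℓ w = i <;> simp [h1, hvw]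
      _ = ∑ v : V, ((univ.filter (fun w => G.Adj v w ∧ ℓ w = i)).card) := by
          refine Finset.sum_congr rfl fun v _ => ?_
          rw [Finset.card_filter]
      _ = ∑ v : V, d := by
          refine Finset.sum_congr rfl fun v _ => perVertex G ℓ d hreg hbal v i
      _ = Fintype.card V * d := by simp [Finset.card_univ, mul_comm]
  intro i j
  have h := (key i).trans (key j).symm
  have h3d : 0 < 3 * d := by omega
  have := Nat.eq_of_mul_eq_mul_left h3d h
  simpa [Set.ncard_eq_toFinset_card', Set.toFinset_setOf] using this

theorem stmt13 {V₁ V₂ : Type*} [Fintype V₁] [Fintype V₂]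
    (G₁ : SimpleGraph V₁) (G₂ : SimpleGraph V₂) (k₁ k₂ : ℕ)
    (hk₁ : 0 < k₁) (hk₂ : 0 < k₂)
    (hreg₁ : ∀ v, {w | G₁.Adj v w}.ncard = 3 * k₁)
    (hreg₂ : ∀ v, {w | G₂.Adj v w}.ncard = 3 * k₂)
    (h₁ : ∃ ℓ, NBalanced G₁ ℓ) (h₂ : ∃ ℓ, NBalanced G₂ ℓ) :
    ∃ ℓ, NBalanced (graphJoin G₁ G₂) ℓ := by
  classical
  obtain ⟨ℓ₁, hb₁⟩ := h₁
  obtain ⟨ℓ₂, hb₂⟩ := h₂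
  refine ⟨Sum.elim ℓ₁ ℓ₂, ?_⟩
  have hcls₁ := classesEq G₁ ℓ₁ k₁ hk₁ hreg₁ hb₁
  have hcls₂ := classesEq G₂ ℓ₂ k₂ hk₂ hreg₂ hb₂
  have split₁ : ∀ (v : V₁) (i : ZMod 3),
      {w : V₁ ⊕ V₂ | (graphJoin G₁ G₂).Adj (Sum.inl v) w ∧ Sum.elim ℓ₁ ℓ₂ w = i}
      = (Sum.inl '' {w | G₁.Adj v w ∧ ℓ₁ w = i}) ∪ (Sum.inr '' {w | ℓ₂ w = i}) := by
    intro v i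
    ext w
    cases w with
    | inl x => simp [graphJoin]
    | inr x => simp [graphJoin]
  have split₂ : ∀ (v : V₂) (i : ZMod 3),
      {w : V₁ ⊕ V₂ | (graphJoin G₁ G₂).Adj (Sum.inr v) w ∧ Sum.elim ℓ₁ ℓ₂ w = i}
      = (Sum.inl '' {w | ℓ₁ w = i}) ∪ (Sum.inr '' {w | G₂.Adj v w ∧ ℓ₂ w = i}) := by
    intro v i
    ext w
    cases w with
    | inl x => simp [graphJoin]
    | inr x => simp [graphJoin]
  have ncardU : ∀ (A : Set V₁) (B : Set V₂),
      ((Sum.inl '' A : Set (V₁ ⊕ V₂)) ∪ (Sum.inr '' B)).ncard = A.ncard + B.ncard := by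
    intro A B
    rw [Set.ncard_union_eq]
    · rw [Set.ncard_image_of_injective _ Sum.inl_injective,
        Set.ncard_image_of_injective _ Sum.inr_injective]
    · rw [Set.disjoint_iff_forall_ne]
      rintro a ⟨x, _, rfl⟩ b ⟨y, _, rfl⟩
      simp
  intro v i j
  cases v with
  | inl v =>
      rw [split₁ v i, split₁ v j, ncardU, ncardU, hb₁ v i j, hcls₂ i j]
  | inr v =>
      rw [split₂ v i, split₂ v j, ncardU, ncardU, hb₂ v i j, hcls₁ i j]
end

section
/- If G₁ and G₂ are graphs each admitting a neighborhood 3-balanced coloring, then the tensor product G₁ × G₂ admits a neighborhood 3-balanced coloring; in fact ℓ(u, v) = ℓ₁(u) + ℓ₂(v) works, where ℓ₁, ℓ₂ are 3-balanced colorings of G₁, G₂. -/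
/-- The tensor (categorical) product of two simple graphs: `(u, v)` is adjacent to
`(u', v')` iff `u u' ∈ E(G₁)` and `v v' ∈ E(G₂)`. -/
def tensorProd {V₁ V₂ : Type*} (G₁ : SimpleGraph V₁) (G₂ : SimpleGraph V₂) :
    SimpleGraph (V₁ × V₂) where
  Adj a b := G₁.Adj a.1 b.1 ∧ G₂.Adj a.2 b.2
  symm := ⟨fun _ _ h => ⟨h.1.symm, h.2.symm⟩⟩
  loopless := ⟨fun a h => G₁.loopless.irrefl a.1 h.1⟩

private lemma ncard_prod' {α β : Type*} (s : Set α) (t : Set β) :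
    (s ×ˢ t).ncard = s.ncard * t.ncard := by
  rw [← Nat.card_coe_set_eq, Nat.card_congr (Equiv.Set.prod s t), Nat.card_prod,
    Nat.card_coe_set_eq, Nat.card_coe_set_eq]

private lemma empty_or_infinite_union {γ : Type*} {s t : Set γ}
    (hs : s = ∅ ∨ s.Infinite) (ht : t = ∅ ∨ t.Infinite) :
    s ∪ t = ∅ ∨ (s ∪ t).Infinite := by
  rcases hs with hs | hs
  · rcases ht with ht | ht
    · left; simp [hs, ht]
    · right; exact ht.mono Set.subset_union_right
  · right; exact hs.mono Set.subset_union_left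

private lemma prod_empty_or_infinite_left {α β : Type*} {s : Set α} (t : Set β)
    (hs : s = ∅ ∨ s.Infinite) : s ×ˢ t = ∅ ∨ (s ×ˢ t).Infinite := by
  rcases hs with hs | hs
  · left; simp [hs]
  · rcases t.eq_empty_or_nonempty with ht | ht
    · left; simp [ht]
    · right; exact hs.prod_left ht

private lemma prod_empty_or_infinite_right {α β : Type*} (s : Set α) {t : Set β}
    (ht : t = ∅ ∨ t.Infinite) : s ×ˢ t = ∅ ∨ (s ×ˢ t).Infinite := by
  rcases ht with ht | ht
  · left; simp [ht]
  · rcases s.eq_empty_or_nonempty with hs | hs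
    · left; simp [hs]
    · right; exact ht.prod_right hs

theorem stmt15 {V₁ V₂ : Type*} (G₁ : SimpleGraph V₁) (G₂ : SimpleGraph V₂)
    (ℓ₁ : V₁ → ZMod 3) (ℓ₂ : V₂ → ZMod 3)
    (h₁ : NBalanced G₁ ℓ₁) (h₂ : NBalanced G₂ ℓ₂) :
    (∃ ℓ, NBalanced (tensorProd G₁ G₂) ℓ) ∧
      NBalanced (tensorProd G₁ G₂) (fun p => ℓ₁ p.1 + ℓ₂ p.2) := by
  have key : NBalanced (tensorProd G₁ G₂) (fun p => ℓ₁ p.1 + ℓ₂ p.2) := by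
    rintro ⟨u, v⟩ i j
    set A : ZMod 3 → Set V₁ := fun c => {w | G₁.Adj u w ∧ ℓ₁ w = c} with hA
    set B : ZMod 3 → Set V₂ := fun c => {w | G₂.Adj v w ∧ ℓ₂ w = c} with hB
    have hcases : ∀ x : ZMod 3, x = 0 ∨ x = 1 ∨ x = 2 := by decide
    have hS : ∀ k : ZMod 3,
        {w : V₁ × V₂ | (tensorProd G₁ G₂).Adj (u, v) w ∧
            (fun p : V₁ × V₂ => ℓ₁ p.1 + ℓ₂ p.2) w = k} =
          (A 0 ×ˢ B (k - 0)) ∪ (A 1 ×ˢ B (k - 1)) ∪ (A 2 ×ˢ B (k - 2)) := by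
      intro k
      ext ⟨w₁, w₂⟩
      simp only [Set.mem_setOf_eq, Set.mem_union, Set.mem_prod, hA, hB]
      constructor
      · rintro ⟨⟨ha1, ha2⟩, hsum⟩
        rcases hcases (ℓ₁ w₁) with h | h | h
        · exact Or.inl (Or.inl ⟨⟨ha1, h⟩, ha2, by rw [← hsum, h]; ring⟩)
        · exact Or.inl (Or.inr ⟨⟨ha1, h⟩, ha2, by rw [← hsum, h]; ring⟩)
        · exact Or.inr ⟨⟨ha1, h⟩, ha2, by rw [← hsum, h]; ring⟩
      · rintro ((⟨⟨ha1, hc1⟩, ha2, hc2⟩ | ⟨⟨ha1, hc1⟩, ha2, hc2⟩) | ⟨⟨ha1, hc1⟩, ha2, hc2⟩) <;>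
          exact ⟨⟨ha1, ha2⟩, by rw [hc1, hc2]; ring⟩
    rw [hS i, hS j]
    by_cases hpos : (∃ c, (A c).Finite ∧ (A c).Nonempty) ∧ (∃ c, (B c).Finite ∧ (B c).Nonempty)
    · obtain ⟨⟨c₁, hf₁, hn₁⟩, c₂, hf₂, hn₂⟩ := hpos
      have ha : ∀ c, (A c).ncard = (A c₁).ncard := fun c => h₁ u c c₁
      have hb : ∀ c, (B c).ncard = (B c₂).ncard := fun c => h₂ v c c₂
      have hApos : 0 < (A c₁).ncard := (Set.ncard_pos hf₁).mpr hn₁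
      have hBpos : 0 < (B c₂).ncard := (Set.ncard_pos hf₂).mpr hn₂
      have hAfin : ∀ c, (A c).Finite := by
        intro c
        by_contra hinf
        have h0 : (A c).ncard = 0 := Set.Infinite.ncard hinf
        rw [ha c] at h0
        omega
      have hBfin : ∀ c, (B c).Finite := by
        intro c
        by_contra hinf
        have h0 : (B c).ncard = 0 := Set.Infinite.ncard hinf
        rw [hb c] at h0
        omega
      have hdisj : ∀ c c' : ZMod 3, c ≠ c' → ∀ b b' : ZMod 3,
          Disjoint (A c ×ˢ B b) (A c' ×ˢ B b') := by
        intro c c' hcc' b b'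
        rw [Set.disjoint_left]
        rintro ⟨x, y⟩ ⟨hx, _⟩ ⟨hx', _⟩
        exact hcc' (by rw [← hx.2, hx'.2])
      have hcard : ∀ k : ZMod 3,
          ((A 0 ×ˢ B (k - 0)) ∪ (A 1 ×ˢ B (k - 1)) ∪ (A 2 ×ˢ B (k - 2))).ncard =
            3 * ((A c₁).ncard * (B c₂).ncard) := by
        intro k
        have hf01 : ((A 0 ×ˢ B (k - 0)) ∪ (A 1 ×ˢ B (k - 1))).Finite :=
          ((hAfin 0).prod (hBfin (k - 0))).union ((hAfin 1).prod (hBfin (k - 1)))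
        rw [Set.ncard_union_eq (Set.disjoint_union_left.mpr
            ⟨hdisj 0 2 (by decide) _ _, hdisj 1 2 (by decide) _ _⟩)
            hf01 ((hAfin 2).prod (hBfin (k - 2))),
          Set.ncard_union_eq (hdisj 0 1 (by decide) _ _)
            ((hAfin 0).prod (hBfin (k - 0))) ((hAfin 1).prod (hBfin (k - 1))),
          ncard_prod', ncard_prod', ncard_prod',
          ha 0, ha 1, ha 2, hb (k - 0), hb (k - 1), hb (k - 2)]
        ring
      rw [hcard i, hcard j]
    · have hzero : ∀ k : ZMod 3,
          ((A 0 ×ˢ B (k - 0)) ∪ (A 1 ×ˢ B (k - 1)) ∪ (A 2 ×ˢ B (k - 2))).ncard = 0 := by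
        intro k
        rcases not_and_or.mp hpos with hp | hp
        · push_neg at hp
          have hAe : ∀ c, A c = ∅ ∨ (A c).Infinite := by
            intro c
            rcases Set.eq_empty_or_nonempty (A c) with h | h
            · exact Or.inl h
            · right
              intro hfin
              exact absurd (hp c hfin) h.ne_empty
          have := empty_or_infinite_union
            (empty_or_infinite_union (prod_empty_or_infinite_left (B (k - 0)) (hAe 0))
              (prod_empty_or_infinite_left (B (k - 1)) (hAe 1)))
            (prod_empty_or_infinite_left (B (k - 2)) (hAe 2))
          rcases this with h | h
          · rw [h, Set.ncard_empty]
          · exact h.ncard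
        · push_neg at hp
          have hBe : ∀ c, B c = ∅ ∨ (B c).Infinite := by
            intro c
            rcases Set.eq_empty_or_nonempty (B c) with h | h
            · exact Or.inl h
            · right
              intro hfin
              exact absurd (hp c hfin) h.ne_empty
          have := empty_or_infinite_union
            (empty_or_infinite_union (prod_empty_or_infinite_right (A 0) (hBe (k - 0)))
              (prod_empty_or_infinite_right (A 1) (hBe (k - 1))))
            (prod_empty_or_infinite_right (A 2) (hBe (k - 2)))
          rcases this with h | h
          · rw [h, Set.ncard_empty]
          · exact h.ncard
      rw [hzero i, hzero j]
  exact ⟨⟨_, key⟩, key⟩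
end

section
/- Let G₁ be any graph and G₂ a 3r-regular graph admitting a neighborhood 3-balanced coloring ℓ₂. Then the lexicographic product G₁ · G₂ admits a neighborhood 3-balanced coloring, given by ℓ(u, v) = ℓ₂(v). -/
/-- The lexicographic product `G₁ · G₂`: `(u, v)` is adjacent to `(u', v')` iff
`u u' ∈ E(G₁)`, or `u = u'` and `v v' ∈ E(G₂)`. -/
def lexProd {V₁ V₂ : Type*} (G₁ : SimpleGraph V₁) (G₂ : SimpleGraph V₂) :
    SimpleGraph (V₁ × V₂) where
  Adj a b := G₁.Adj a.1 b.1 ∨ (a.1 = b.1 ∧ G₂.Adj a.2 b.2)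
  symm := ⟨by
    rintro a b (h | ⟨h, h'⟩)
    · exact Or.inl h.symm
    · exact Or.inr ⟨h.symm, h'.symm⟩⟩
  loopless := ⟨by
    rintro a (h | ⟨h, h'⟩)
    · exact G₁.ne_of_adj h rfl
    · exact G₂.ne_of_adj h' rfl⟩


open Classical in
/-- each vertex has exactly r neighbors of each color -/
lemma aux_r {V₂ : Type*} [Fintype V₂] (G₂ : SimpleGraph V₂) (r : ℕ)
    (hreg₂ : ∀ v, {w | G₂.Adj v w}.ncard = 3 * r)
    (ℓ₂ : V₂ → ZMod 3) (h₂ : NBalanced G₂ ℓ₂) :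
    ∀ v i, {w | G₂.Adj v w ∧ ℓ₂ w = i}.ncard = r := by
  intro v i
  have hsplit : {w | G₂.Adj v w} =
      {w | G₂.Adj v w ∧ ℓ₂ w = 0} ∪ ({w | G₂.Adj v w ∧ ℓ₂ w = 1} ∪ {w | G₂.Adj v w ∧ ℓ₂ w = 2}) := by
    ext w
    have : ℓ₂ w = 0 ∨ ℓ₂ w = 1 ∨ ℓ₂ w = 2 := by
      revert w; intro w; exact (by decide : ∀ x : ZMod 3, x = 0 ∨ x = 1 ∨ x = 2) (ℓ₂ w)
    simp only [Set.mem_setOf_eq, Set.mem_union]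
    tauto
  have d12 : Disjoint {w | G₂.Adj v w ∧ ℓ₂ w = (1:ZMod 3)} {w | G₂.Adj v w ∧ ℓ₂ w = 2} := by
    rw [Set.disjoint_left]; rintro w ⟨_, h1⟩ ⟨_, h2⟩; rw [h1] at h2; exact absurd h2 (by decide)
  have d0 : Disjoint {w | G₂.Adj v w ∧ ℓ₂ w = (0:ZMod 3)}
      ({w | G₂.Adj v w ∧ ℓ₂ w = 1} ∪ {w | G₂.Adj v w ∧ ℓ₂ w = 2}) := by
    rw [Set.disjoint_left]; rintro w ⟨_, h0⟩ (⟨_, h1⟩ | ⟨_, h2⟩)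
    · rw [h0] at h1; exact absurd h1 (by decide)
    · rw [h0] at h2; exact absurd h2 (by decide)
  have hsum : 3 * r = {w | G₂.Adj v w ∧ ℓ₂ w = (0:ZMod 3)}.ncard +
      ({w | G₂.Adj v w ∧ ℓ₂ w = (1:ZMod 3)}.ncard + {w | G₂.Adj v w ∧ ℓ₂ w = 2}.ncard) := by
    rw [← hreg₂ v, hsplit, Set.ncard_union_eq d0 (Set.toFinite _) (Set.toFinite _),
      Set.ncard_union_eq d12 (Set.toFinite _) (Set.toFinite _)]
  have e1 := h₂ v i 0
  have e2 := h₂ v i 1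
  have e3 := h₂ v i 2
  omega

open Classical in
/-- all color classes have the same size -/
lemma aux_C {V₂ : Type*} [Fintype V₂] (G₂ : SimpleGraph V₂) (r : ℕ) (hr : 0 < r)
    (hreg₂ : ∀ v, {w | G₂.Adj v w}.ncard = 3 * r)
    (ℓ₂ : V₂ → ZMod 3) (h₂ : NBalanced G₂ ℓ₂) :
    ∀ i j : ZMod 3, {w | ℓ₂ w = i}.ncard = {w | ℓ₂ w = j}.ncard := by
  classical
  have key : ∀ i : ZMod 3, 3 * r * {w | ℓ₂ w = i}.ncard = r * Fintype.card V₂ := by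
    intro i
    have hC : {w | ℓ₂ w = i}.ncard = (Finset.univ.filter (fun w => ℓ₂ w = i)).card := by
      rw [← Set.ncard_coe_finset]; congr 1; ext w; simp
    have hFc : ∀ v : V₂, (Finset.univ.filter (fun w => G₂.Adj v w ∧ ℓ₂ w = i)).card = r := by
      intro v
      have := aux_r G₂ r hreg₂ ℓ₂ h₂ v i
      rw [show {w | G₂.Adj v w ∧ ℓ₂ w = i} =
        ↑(Finset.univ.filter (fun w => G₂.Adj v w ∧ ℓ₂ w = i)) by ext w; simp,
        Set.ncard_coe_finset] at this
      exact this
    have hdeg : ∀ w : V₂, (Finset.univ.filter (fun v => G₂.Adj v w)).card = 3 * r := by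
      intro w
      have := hreg₂ w
      rw [show {x | G₂.Adj w x} = ↑(Finset.univ.filter (fun x => G₂.Adj w x)) by ext x; simp,
        Set.ncard_coe_finset] at this
      rw [← this]
      congr 1; ext v; simp [G₂.adj_comm]
    have calc1 : ∑ v : V₂, (Finset.univ.filter (fun w => G₂.Adj v w ∧ ℓ₂ w = i)).card
        = Fintype.card V₂ * r := by
      simp [hFc, Finset.card_univ]
    have calc2 : ∑ v : V₂, (Finset.univ.filter (fun w => G₂.Adj v w ∧ ℓ₂ w = i)).card
        = 3 * r * (Finset.univ.filter (fun w => ℓ₂ w = i)).card := by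
      simp_rw [Finset.card_filter]
      rw [Finset.sum_comm]
      have : ∀ w : V₂, (∑ v : V₂, if G₂.Adj v w ∧ ℓ₂ w = i then 1 else 0)
          = if ℓ₂ w = i then 3 * r else 0 := by
        intro w
        by_cases h : ℓ₂ w = i
        · simp only [h, and_true, if_true]
          rw [← hdeg w, Finset.card_filter]
        · simp [h]
      simp_rw [this]
      rw [← Finset.sum_filter, Finset.sum_const, smul_eq_mul, mul_comm]
      rw [Finset.card_filter]
    rw [hC, ← calc2, calc1, mul_comm]
  intro i j
  have hi := key i
  have hj := key j
  have h3r : 0 < 3 * r := by omega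
  exact Nat.eq_of_mul_eq_mul_left h3r (hi.trans hj.symm)

theorem stmt17 {V₁ V₂ : Type*} [Fintype V₂] (G₁ : SimpleGraph V₁)
    (G₂ : SimpleGraph V₂) (r : ℕ) (hr : 0 < r)
    (hreg₂ : ∀ v, {w | G₂.Adj v w}.ncard = 3 * r)
    (ℓ₂ : V₂ → ZMod 3) (h₂ : NBalanced G₂ ℓ₂) :
    NBalanced (lexProd G₁ G₂) (fun p => ℓ₂ p.2) := by
  classical
  intro p i j
  have hri := aux_r G₂ r hreg₂ ℓ₂ h₂
  have hC := aux_C G₂ r hr hreg₂ ℓ₂ h₂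
  have hA : ∀ k : ZMod 3, {w : V₁ × V₂ | (lexProd G₁ G₂).Adj p w ∧ ℓ₂ w.2 = k} =
      ({u' | G₁.Adj p.1 u'} ×ˢ {w | ℓ₂ w = k}) ∪
      ({p.1} ×ˢ {w | G₂.Adj p.2 w ∧ ℓ₂ w = k}) := by
    intro k
    ext ⟨a, b⟩
    simp only [Set.mem_setOf_eq, Set.mem_union, Set.mem_prod, Set.mem_singleton_iff, lexProd]
    constructor
    · rintro ⟨h1 | ⟨h1, h1'⟩, h2⟩
      · exact Or.inl ⟨h1, h2⟩
      · exact Or.inr ⟨h1.symm, h1', h2⟩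
    · rintro (⟨h1, h2⟩ | ⟨h1, h2, h3⟩)
      · exact ⟨Or.inl h1, h2⟩
      · exact ⟨Or.inr ⟨h1.symm, h2⟩, h3⟩
  have hdisj : ∀ k : ZMod 3, Disjoint ({u' | G₁.Adj p.1 u'} ×ˢ {w | ℓ₂ w = k})
      ({p.1} ×ˢ {w | G₂.Adj p.2 w ∧ ℓ₂ w = k}) := by
    intro k
    rw [Set.disjoint_left]
    rintro ⟨a, b⟩ ⟨ha, _⟩ ⟨ha', _⟩
    simp only [Set.mem_setOf_eq] at ha
    simp only [Set.mem_singleton_iff] at ha'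
    exact G₁.loopless.irrefl p.1 (ha' ▸ ha)
  by_cases hfin : {u' | G₁.Adj p.1 u'}.Finite
  · rw [hA i, hA j,
      Set.ncard_union_eq (hdisj i) (hfin.prod (Set.toFinite _))
        ((Set.finite_singleton _).prod (Set.toFinite _)),
      Set.ncard_union_eq (hdisj j) (hfin.prod (Set.toFinite _))
        ((Set.finite_singleton _).prod (Set.toFinite _))]
    have hprodcard : ∀ (s : Set V₁) (t : Set V₂), (s ×ˢ t).ncard = s.ncard * t.ncard := by
      intro s t
      rw [← Nat.card_coe_set_eq, ← Nat.card_coe_set_eq, ← Nat.card_coe_set_eq,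
        Nat.card_congr (Equiv.Set.prod s t), Nat.card_prod]
    simp only [hprodcard, Set.ncard_singleton, one_mul, hri p.2 i, hri p.2 j, hC i j]
  · have hne : ∀ k : ZMod 3, {w | ℓ₂ w = k}.Nonempty := by
      intro k
      have h1 : {w | G₂.Adj p.2 w ∧ ℓ₂ w = k}.ncard = r := hri p.2 k
      have h2 : {w | G₂.Adj p.2 w ∧ ℓ₂ w = k}.Nonempty := by
        rw [← Set.ncard_pos (Set.toFinite _)]; omega
      obtain ⟨w, _, hw⟩ := h2
      exact ⟨w, hw⟩
    have hinf : ∀ k : ZMod 3, {w : V₁ × V₂ | (lexProd G₁ G₂).Adj p w ∧ ℓ₂ w.2 = k}.Infinite := by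
      intro k
      rw [hA k]
      exact ((Set.Infinite.prod_left hfin (hne k)).mono Set.subset_union_left)
    rw [(hinf i).ncard, (hinf j).ncard]
end

section
/- Let G be a cubic graph with a neighborhood 3-balanced coloring ℓ : V → ℤ/3, and define the induced edge coloring ℓ(uv) = ℓ(u) + ℓ(v). Then this edge coloring is a proper 3-edge-coloring (Tait coloring) of G: the three edges incident to any vertex receive three distinct colors. In particular, for each color c ∈ ℤ/3, the set of edges colored c is a perfect matching of G. -/
theorem stmt18 {V : Type*} [Fintype V] (G : SimpleGraph V)
    (hcubic : ∀ v : V, {w | G.Adj v w}.ncard = 3)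
    (ℓ : V → ZMod 3) (h : NBalanced G ℓ) :
    (∀ v w w' : V, G.Adj v w → G.Adj v w' → w ≠ w' →
      ℓ v + ℓ w ≠ ℓ v + ℓ w') ∧
    (∀ c : ZMod 3, ∀ v : V, ∃! w : V, G.Adj v w ∧ ℓ v + ℓ w = c) := by
  classical
  -- Each vertex has exactly one neighbor of each color.
  have key : ∀ v : V, ∀ i : ZMod 3, {w | G.Adj v w ∧ ℓ w = i}.ncard = 1 := by
    intro v i
    let A : ZMod 3 → Set V := fun j => {w | G.Adj v w ∧ ℓ w = j}
    have hA : ∀ j, A j = {w | G.Adj v w ∧ ℓ w = j} := fun _ => rfl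
    have hfin : ∀ j, (A j).Finite := fun j => Set.toFinite _
    have hdisj : ∀ j k : ZMod 3, j ≠ k → Disjoint (A j) (A k) := by
      intro j k hjk
      rw [Set.disjoint_left]
      rintro w ⟨_, hj⟩ ⟨_, hk⟩
      exact hjk (hj ▸ hk ▸ rfl)
    have hunion : {w | G.Adj v w} = A 0 ∪ A 1 ∪ A 2 := by
      ext w
      have h3 : ℓ w = 0 ∨ ℓ w = 1 ∨ ℓ w = 2 := by
        have : ∀ x : ZMod 3, x = 0 ∨ x = 1 ∨ x = 2 := by decide
        exact this (ℓ w)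
      constructor
      · intro hw
        rcases h3 with h0 | h1 | h2
        · exact Or.inl (Or.inl ⟨hw, h0⟩)
        · exact Or.inl (Or.inr ⟨hw, h1⟩)
        · exact Or.inr ⟨hw, h2⟩
      · rintro ((⟨hw, _⟩ | ⟨hw, _⟩) | ⟨hw, _⟩) <;> exact hw
    have hcard : (A 0).ncard + (A 1).ncard + (A 2).ncard = 3 := by
      have h01 : Disjoint (A 0) (A 1) := hdisj 0 1 (by decide)
      have h012 : Disjoint (A 0 ∪ A 1) (A 2) :=
        Disjoint.union_left (hdisj 0 2 (by decide)) (hdisj 1 2 (by decide))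
      have e1 : (A 0 ∪ A 1 ∪ A 2).ncard = (A 0 ∪ A 1).ncard + (A 2).ncard :=
        Set.ncard_union_eq h012 ((hfin 0).union (hfin 1)) (hfin 2)
      have e2 : (A 0 ∪ A 1).ncard = (A 0).ncard + (A 1).ncard :=
        Set.ncard_union_eq h01 (hfin 0) (hfin 1)
      have := hcubic v
      rw [hunion] at this
      omega
    simp only [hA] at hcard
    have heq := h v
    rw [heq 0 i, heq 1 i, heq 2 i] at hcard
    omega
  constructor
  · intro v w w' hw hw' hne habs
    have hcol : ℓ w = ℓ w' := by
      have := add_left_cancel habs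
      exact this
    obtain ⟨a, ha⟩ := Set.ncard_eq_one.mp (key v (ℓ w))
    have h1 : w ∈ {x | G.Adj v x ∧ ℓ x = ℓ w} := ⟨hw, rfl⟩
    have h2 : w' ∈ {x | G.Adj v x ∧ ℓ x = ℓ w} := ⟨hw', hcol.symm⟩
    rw [ha] at h1 h2
    exact hne (h1.trans h2.symm)
  · intro c v
    obtain ⟨a, ha⟩ := Set.ncard_eq_one.mp (key v (c - ℓ v))
    have hmem : a ∈ {w | G.Adj v w ∧ ℓ w = c - ℓ v} := ha ▸ rfl
    refine ⟨a, ⟨hmem.1, by rw [hmem.2]; ring⟩, ?_⟩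
    intro y ⟨hy, hyc⟩
    have : y ∈ {w | G.Adj v w ∧ ℓ w = c - ℓ v} := ⟨hy, by rw [← hyc]; ring⟩
    rw [ha] at this
    exact this
end

section
/- Given a 3-balanced cubic dataset ({V_i}_{i∈ℤ/3}, {s_{ij}}), the graph G with vertex set the disjoint union of V_0, V_1, V_2 and edge set {v s_{ij}(v) : v ∈ V_i, i, j ∈ ℤ/3}, colored by ℓ(v) = i for v ∈ V_i, is a cubic graph and ℓ is a neighborhood 3-balanced coloring of G. Conversely, every cubic graph with a neighborhood 3-balanced coloring arises in this way from some 3-balanced cubic dataset. -/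
/-- The graph associated to a 3-balanced cubic dataset: the vertex set is the disjoint
union of the `V i`, and `⟨i, x⟩` is joined to `⟨j, s i j x⟩` for each `i, j`. -/
def dataGraph {V : ZMod 3 → Type*} (s : ∀ i j, V i ≃ V j)
    (hsymm : ∀ i j, (s i j).symm = s j i) : SimpleGraph (Σ i, V i) where
  Adj a b := a ≠ b ∧ b.2 = s a.1 b.1 a.2
  symm := ⟨by
    rintro ⟨i, x⟩ ⟨j, y⟩ ⟨hne, hadj⟩
    refine ⟨Ne.symm hne, ?_⟩
    simp only at hadj ⊢
    have hx : (s i j).symm y = x := by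
      rw [hadj]; exact (s i j).symm_apply_apply x
    rw [← hsymm i j]
    exact hx.symm⟩
  loopless := ⟨fun a h => h.1 rfl⟩

universe u

lemma zmod3_cases_s19 (i : ZMod 3) : i = 0 ∨ i = 1 ∨ i = 2 := by revert i; decide

lemma unique_nbr {W : Type u} (G : SimpleGraph W) (ℓ : W → ZMod 3)
    (hcub : ∀ v : W, {w | G.Adj v w}.ncard = 3) (hbal : NBalanced G ℓ)
    (v : W) (j : ZMod 3) : {w | G.Adj v w ∧ ℓ w = j}.ncard = 1 := by
  have hNfin : {w | G.Adj v w}.Finite :=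
    Set.finite_of_ncard_ne_zero (by rw [hcub v]; norm_num)
  have hSfin : ∀ k : ZMod 3, {w | G.Adj v w ∧ ℓ w = k}.Finite :=
    fun k => hNfin.subset (fun w hw => hw.1)
  have hsplit : {w | G.Adj v w} =
      {w | G.Adj v w ∧ ℓ w = 0} ∪ ({w | G.Adj v w ∧ ℓ w = 1} ∪ {w | G.Adj v w ∧ ℓ w = 2}) := by
    ext w
    simp only [Set.mem_setOf_eq, Set.mem_union]
    constructor
    · intro hw
      rcases zmod3_cases_s19 (ℓ w) with h | h | h
      · exact Or.inl ⟨hw, h⟩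
      · exact Or.inr (Or.inl ⟨hw, h⟩)
      · exact Or.inr (Or.inr ⟨hw, h⟩)
    · rintro (⟨h, -⟩ | ⟨h, -⟩ | ⟨h, -⟩) <;> exact h
  have hdisj : ∀ a b : ZMod 3, a ≠ b →
      Disjoint {w | G.Adj v w ∧ ℓ w = a} {w | G.Adj v w ∧ ℓ w = b} := by
    intro a b hab
    rw [Set.disjoint_left]
    rintro w ⟨-, ha⟩ ⟨-, hb⟩
    exact hab (ha ▸ hb ▸ rfl)
  have h3 := hcub v
  rw [hsplit] at h3
  rw [Set.ncard_union_eq (by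
        refine Set.disjoint_union_right.mpr ⟨hdisj 0 1 (by decide), hdisj 0 2 (by decide)⟩)
      (hSfin 0) ((hSfin 1).union (hSfin 2)),
    Set.ncard_union_eq (hdisj 1 2 (by decide)) (hSfin 1) (hSfin 2)] at h3
  have e1 := hbal v 0 j
  have e2 := hbal v 1 j
  have e3 := hbal v 2 j
  omega

theorem stmt19 :
    (∀ (V : ZMod 3 → Type u) (s : ∀ i j, V i ≃ V j)
        (hsymm : ∀ i j, (s i j).symm = s j i)
        (_hfix : ∀ (i : ZMod 3) (x : V i), s i i x ≠ x),
      (∀ v : Σ i, V i, {w | (dataGraph s hsymm).Adj v w}.ncard = 3) ∧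
        NBalanced (dataGraph s hsymm) (fun a => a.1)) ∧
    (∀ (W : Type u) (G : SimpleGraph W) (ℓ : W → ZMod 3),
      (∀ v : W, {w | G.Adj v w}.ncard = 3) → NBalanced G ℓ →
      ∃ s : ∀ i j : ZMod 3, {v : W // ℓ v = i} ≃ {v : W // ℓ v = j},
        (∀ i j, (s i j).symm = s j i) ∧
        (∀ (i : ZMod 3) (x : {v : W // ℓ v = i}), (s i i x).1 ≠ x.1) ∧
        (∀ a b : W, G.Adj a b ↔ (a ≠ b ∧ ((s (ℓ a) (ℓ b)) ⟨a, rfl⟩).1 = b))) := by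
  constructor
  · intro V s hsymm hfix
    have hne : ∀ (i : ZMod 3) (x : V i) (j : ZMod 3),
        (⟨j, s i j x⟩ : Σ i, V i) ≠ ⟨i, x⟩ := by
      intro i x j h
      by_cases hji : j = i
      · subst hji
        obtain ⟨-, h2⟩ := Sigma.mk.inj_iff.mp h
        exact hfix j x (heq_iff_eq.mp h2)
      · exact hji (Sigma.mk.inj_iff.mp h).1
    have hadj_iff : ∀ (i : ZMod 3) (x : V i) (w : Σ i, V i),
        (dataGraph s hsymm).Adj ⟨i, x⟩ w ↔ ∃ j, w = ⟨j, s i j x⟩ := by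
      intro i x w
      show ((⟨i, x⟩ : Σ i, V i) ≠ w ∧ w.2 = s i w.1 x) ↔ _
      constructor
      · rintro ⟨-, h2⟩
        exact ⟨w.1, by rw [← h2]⟩
      · rintro ⟨k, rfl⟩
        exact ⟨fun h => hne i x k h.symm, rfl⟩
    have hnbr : ∀ (i : ZMod 3) (x : V i),
        {w | (dataGraph s hsymm).Adj ⟨i, x⟩ w}
          = Set.range (fun j => (⟨j, s i j x⟩ : Σ i, V i)) := by
      intro i x
      ext w
      simp only [Set.mem_setOf_eq, Set.mem_range, hadj_iff i x w, eq_comm]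
    have hcolor : ∀ (i : ZMod 3) (x : V i) (c : ZMod 3),
        {w : Σ i, V i | (dataGraph s hsymm).Adj ⟨i, x⟩ w ∧ w.1 = c}
          = {(⟨c, s i c x⟩ : Σ i, V i)} := by
      intro i x c
      ext w
      simp only [Set.mem_setOf_eq, Set.mem_singleton_iff, hadj_iff i x w]
      constructor
      · rintro ⟨⟨k, rfl⟩, hc⟩
        simp only at hc
        subst hc
        rfl
      · rintro rfl
        exact ⟨⟨c, rfl⟩, rfl⟩
    constructor
    · rintro ⟨i, x⟩
      rw [hnbr i x, ← Set.image_univ,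
        Set.ncard_image_of_injective _ (fun a b h => congrArg Sigma.fst h),
        Set.ncard_univ]
      simp
    · rintro ⟨i, x⟩ c d
      rw [show {w : Σ i, V i | (dataGraph s hsymm).Adj ⟨i, x⟩ w ∧ w.1 = c}
            = _ from hcolor i x c,
        show {w : Σ i, V i | (dataGraph s hsymm).Adj ⟨i, x⟩ w ∧ w.1 = d}
            = _ from hcolor i x d]
      simp
  · intro W G ℓ hcub hbal
    classical
    have hEU : ∀ (v : W) (j : ZMod 3), ∃! w, G.Adj v w ∧ ℓ w = j := by
      intro v j
      obtain ⟨a, ha⟩ := Set.ncard_eq_one.mp (unique_nbr G ℓ hcub hbal v j)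
      rw [Set.eq_singleton_iff_unique_mem] at ha
      exact ⟨a, ha.1, fun w hw => ha.2 w hw⟩
    choose f hf huniq using hEU
    have hinv : ∀ (v : W) (j : ZMod 3), f (f v j) (ℓ v) = v :=
      fun v j => (huniq (f v j) (ℓ v) v ⟨(hf v j).1.symm, rfl⟩).symm
    refine ⟨fun i j =>
      { toFun := fun x => ⟨f x.1 j, (hf x.1 j).2⟩
        invFun := fun y => ⟨f y.1 i, (hf y.1 i).2⟩
        left_inv := ?_
        right_inv := ?_ }, ?_, ?_, ?_⟩
    · rintro ⟨x, hx⟩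
      exact Subtype.ext (by simpa [hx] using hinv x j)
    · rintro ⟨y, hy⟩
      exact Subtype.ext (by simpa [hy] using hinv y i)
    · intro i j
      rfl
    · intro i x
      exact ((hf x.1 i).1).ne'
    · intro a b
      constructor
      · intro h
        exact ⟨h.ne, (huniq a (ℓ b) b ⟨h, rfl⟩).symm⟩
      · rintro ⟨-, heq⟩
        have := (hf a (ℓ b)).1
        simp only [Equiv.coe_fn_mk] at heq
        rwa [heq] at this
end
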